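/- arXiv:0704.0884 — 5 statements merged into one kernel-verified Lean document; each statement's English description precedes it below -/
import Mathlib

section
/- Let Ω ⊆ ℂⁿ be a bounded open set and A ⊆ Ω. Define h_{A,Ω} := sup{ u : u plurisubharmonic on Ω, u ≤ 1 on Ω, u ≤ 0 on A }, and let h*_{A,Ω} be its upper semicontinuous regularization. Then either h*_{A,Ω} ≡ 0 on Ω, or sup_Ω h*_{A,Ω} = 1. -/
open Complex Metric MeasureTheory Filter Set Topology

noncomputable section

/-- The positive part of an extended real number, as an extended nonnegative real. -/
def EReal.posPart (x : EReal) : ENNReal := if x = ⊤ then ⊤ else ENNReal.ofReal x.toReal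

/-- The average of an `EReal`-valued function over the circle of center `z` and radius `r`. -/
def erealCircleAvg (u : ℂ → EReal) (z : ℂ) (r : ℝ) : EReal :=
  ((∫⁻ θ in Set.Ioc (0:ℝ) (2 * Real.pi), (u (circleMap z r θ)).posPart : ENNReal) : EReal)
      / ((2 * Real.pi : ℝ) : EReal)
    - ((∫⁻ θ in Set.Ioc (0:ℝ) (2 * Real.pi), (-(u (circleMap z r θ))).posPart : ENNReal) : EReal)
      / ((2 * Real.pi : ℝ) : EReal)

variable {V : Type*} [NormedAddCommGroup V] [NormedSpace ℂ V]

/-- Plurisubharmonicity of an `EReal`-valued function on a set: upper semicontinuity together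
with the sub-mean value inequality on every complex line.  For `V = ℂ` this is subharmonicity. -/
def PSHOn (u : V → EReal) (Ω : Set V) : Prop :=
  UpperSemicontinuousOn u Ω ∧
    ∀ z ∈ Ω, ∀ b : V, ∀ r : ℝ, 0 < r →
      (∀ lam : ℂ, ‖lam‖ ≤ r → z + lam • b ∈ Ω) →
      u z ≤ erealCircleAvg (fun lam => u (z + lam • b)) 0 r

/-- The relative extremal function `h_{A,Ω}`. -/
def relExt (A Ω : Set V) : V → EReal := fun z =>
  sSup ((fun u : V → EReal => u z) ''
    {u | PSHOn u Ω ∧ (∀ w ∈ Ω, u w ≤ 1) ∧ ∀ w ∈ A, u w ≤ 0})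

/-- The upper semicontinuous regularization `h*_{A,Ω}`. -/
def relExtStar (A Ω : Set V) : V → EReal := fun z =>
  Filter.limsup (relExt A Ω) (nhdsWithin z Ω)

/-- Hartogs pseudoconvexity: `-log dist(·, Ωᶜ)` is plurisubharmonic on `Ω`. -/
def IsPseudoconvex (Ω : Set V) : Prop :=
  IsOpen Ω ∧ PSHOn (fun z => ((-Real.log (Metric.infDist z Ωᶜ) : ℝ) : EReal)) Ω

/-- `S` does not separate domains in `D`. -/
def DoesNotSeparate (S D : Set V) : Prop :=
  ∀ U ⊆ D, IsOpen U → IsConnected U → IsConnected (U \ S)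

/-- Meromorphic on an open set: locally a quotient of holomorphic functions (with a
representative function whose values at the pole set are irrelevant). -/
def MeromorphicOnOpen (F : V → ℂ) (Ω : Set V) : Prop :=
  ∀ z ∈ Ω, ∃ U : Set V, IsOpen U ∧ z ∈ U ∧ U ⊆ Ω ∧
    ∃ g h : V → ℂ, DifferentiableOn ℂ g U ∧ DifferentiableOn ℂ h U ∧
      (¬ ∀ w ∈ U, h w = 0) ∧ ∀ w ∈ U, h w ≠ 0 → F w = g w / h w

/-- The open polydisc of radius `r` in `ℂⁿ`. -/
def polydisc (n : ℕ) (r : ℝ) : Set (Fin n → ℂ) := {z | ∀ k, ‖z k‖ < r}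

/-- Baire category I relative to `D`: contained in a countable union of relatively closed
subsets of `D` with empty interior. -/
def BaireCatI (S D : Set V) : Prop :=
  ∃ F : ℕ → Set V, (∀ k, F k ⊆ D ∧ closure (F k) ∩ D ⊆ F k ∧ interior (F k) = ∅) ∧
    S ⊆ ⋃ k, F k

end

section Aux

variable {V : Type*} [NormedAddCommGroup V] [NormedSpace ℂ V]

lemma aux_posPart_mul (c : ℝ) (hc : 0 < c) (x : EReal) :
    ((c : EReal) * x).posPart = ENNReal.ofReal c * x.posPart := by
  induction x using EReal.rec with
  | bot =>
      rw [EReal.coe_mul_bot_of_pos hc]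
      simp [EReal.posPart]
  | coe x =>
      rw [← EReal.coe_mul]
      simp only [EReal.posPart, EReal.coe_ne_top, if_false, EReal.toReal_coe]
      exact ENNReal.ofReal_mul hc.le
  | top =>
      rw [EReal.coe_mul_top_of_pos hc]
      simp [EReal.posPart, ENNReal.mul_top, (ENNReal.ofReal_pos.mpr hc).ne']

lemma aux_mul_sub (c : ℝ) (hc : 0 < c) {P Q : EReal} (hP : 0 ≤ P) (hQ : 0 ≤ Q) :
    (c : EReal) * (P - Q) = (c : EReal) * P - (c : EReal) * Q := by
  rcases eq_or_ne Q ⊤ with hQt | hQt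
  · rw [hQt, EReal.sub_top, EReal.coe_mul_bot_of_pos hc, EReal.coe_mul_top_of_pos hc,
      EReal.sub_top]
  · have hQb : Q ≠ ⊥ := (lt_of_lt_of_le EReal.bot_lt_zero hQ).ne'
    obtain ⟨q, rfl⟩ : ∃ q : ℝ, Q = (q : EReal) := ⟨Q.toReal, (EReal.coe_toReal hQt hQb).symm⟩
    rcases eq_or_ne P ⊤ with hPt | hPt
    · rw [hPt, EReal.top_sub_coe, EReal.coe_mul_top_of_pos hc, ← EReal.coe_mul,
        EReal.top_sub_coe]
    · have hPb : P ≠ ⊥ := (lt_of_lt_of_le EReal.bot_lt_zero hP).ne'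
      obtain ⟨p, rfl⟩ : ∃ p : ℝ, P = (p : EReal) := ⟨P.toReal, (EReal.coe_toReal hPt hPb).symm⟩
      norm_cast
      ring

lemma aux_avg_mul (c : ℝ) (hc : 0 < c) (u : ℂ → EReal) (z : ℂ) (r : ℝ) :
    erealCircleAvg (fun lam => (c : EReal) * u lam) z r
      = (c : EReal) * erealCircleAvg u z r := by
  unfold erealCircleAvg
  have h1 : ∀ θ : ℝ, ((c : EReal) * u (circleMap z r θ)).posPart
      = ENNReal.ofReal c * (u (circleMap z r θ)).posPart := fun θ => aux_posPart_mul c hc _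
  have h2 : ∀ θ : ℝ, (-((c : EReal) * u (circleMap z r θ))).posPart
      = ENNReal.ofReal c * (-(u (circleMap z r θ))).posPart := fun θ => by
    rw [← mul_neg]; exact aux_posPart_mul c hc _
  simp only [h1, h2]
  rw [lintegral_const_mul' _ _ ENNReal.ofReal_ne_top,
    lintegral_const_mul' _ _ ENNReal.ofReal_ne_top, EReal.coe_ennreal_mul,
    EReal.coe_ennreal_mul, EReal.coe_ennreal_ofReal, max_eq_left hc.le,
    ← EReal.mul_div, ← EReal.mul_div]
  have hd : (0 : EReal) ≤ ((2 * Real.pi : ℝ) : EReal) := by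
    exact_mod_cast (by positivity : (0:ℝ) ≤ 2 * Real.pi)
  exact (aux_mul_sub c hc (EReal.div_nonneg (EReal.coe_ennreal_nonneg _) hd)
    (EReal.div_nonneg (EReal.coe_ennreal_nonneg _) hd)).symm

lemma aux_psh_mul {u : V → EReal} {Ω : Set V} (c : ℝ) (hc : 0 < c) (h : PSHOn u Ω) :
    PSHOn (fun z => (c : EReal) * u z) Ω := by
  have hc0 : (0 : EReal) ≤ (c : EReal) := by exact_mod_cast hc.le
  constructor
  · have hcont : Continuous (fun x : EReal => (c : EReal) * x) := by
      rw [continuous_iff_continuousAt]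
      intro x
      have hmul : ContinuousAt (fun p : EReal × EReal => p.1 * p.2) ((c : EReal), x) :=
        EReal.continuousAt_mul (Or.inl (by simpa using hc.ne'))
          (Or.inl (by simpa using hc.ne'))
          (Or.inl (EReal.coe_ne_bot c)) (Or.inl (EReal.coe_ne_top c))
      exact hmul.comp (continuous_const.prodMk continuous_id).continuousAt
    exact hcont.comp_upperSemicontinuousOn h.1
      (fun a b hab => mul_le_mul_of_nonneg_left hab hc0)
  · intro z hz b r hr hcirc
    calc (c : EReal) * u z
        ≤ (c : EReal) * erealCircleAvg (fun lam => u (z + lam • b)) 0 r :=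
          mul_le_mul_of_nonneg_left (h.2 z hz b r hr hcirc) hc0
      _ = erealCircleAvg (fun lam => (c : EReal) * u (z + lam • b)) 0 r :=
          (aux_avg_mul c hc _ 0 r).symm

lemma aux_avg_zero (z : ℂ) (r : ℝ) : erealCircleAvg (fun _ => (0 : EReal)) z r = 0 := by
  unfold erealCircleAvg
  simp [EReal.posPart, EReal.zero_div]

lemma aux_psh_zero (Ω : Set V) : PSHOn (fun _ => (0 : EReal)) Ω := by
  refine ⟨upperSemicontinuousOn_const, fun z hz b r hr hcirc => ?_⟩
  simpa using (aux_avg_zero 0 r).ge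

end Aux

/-- For a bounded open `Ω ⊆ ℂⁿ` and `A ⊆ Ω`, either `h*_{A,Ω} ≡ 0` on `Ω`
or `sup_Ω h*_{A,Ω} = 1`. -/
theorem stmt_0 {n : ℕ} (Ω A : Set (Fin n → ℂ)) (hΩ : IsOpen Ω)
    (hΩb : Bornology.IsBounded Ω) (hA : A ⊆ Ω) :
    (∀ z ∈ Ω, relExtStar A Ω z = 0) ∨ sSup (relExtStar A Ω '' Ω) = 1 := by
  classical
  set fam : Set ((Fin n → ℂ) → EReal) :=
    {u | PSHOn u Ω ∧ (∀ w ∈ Ω, u w ≤ 1) ∧ ∀ w ∈ A, u w ≤ 0} with hfam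
  have hfam0 : (fun _ => (0 : EReal)) ∈ fam :=
    ⟨aux_psh_zero Ω, fun w _ => zero_le_one, fun w _ => le_refl 0⟩
  have hrelExt_def : ∀ z, relExt A Ω z
      = sSup ((fun u : (Fin n → ℂ) → EReal => u z) '' fam) := fun z => rfl
  have f1 : ∀ z, (0 : EReal) ≤ relExt A Ω z := fun z => by
    rw [hrelExt_def]
    exact le_sSup ⟨_, hfam0, rfl⟩
  have f2 : ∀ z ∈ Ω, relExt A Ω z ≤ 1 := by
    intro z hz
    rw [hrelExt_def]
    exact sSup_le (by rintro _ ⟨u, hu, rfl⟩; exact hu.2.1 z hz)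
  have f4 : ∀ z ∈ Ω, relExt A Ω z ≤ relExtStar A Ω z := by
    intro z hz
    have hnz : 𝓝[Ω] z = 𝓝 z := nhdsWithin_eq_nhds.mpr (hΩ.mem_nhds hz)
    rw [relExtStar, hnz, Filter.limsup_eq]
    exact le_sInf fun a ha => ha.self_of_nhds
  have f6 : ∀ z ∈ Ω, relExtStar A Ω z ≤ 1 := by
    intro z hz
    refine Filter.limsup_le_of_le (by isBoundedDefault) ?_
    exact Filter.eventually_of_mem self_mem_nhdsWithin (fun w hw => f2 w hw)
  by_cases hsup : sSup (relExtStar A Ω '' Ω) = 1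
  · exact Or.inr hsup
  left
  set M : EReal := sSup (relExtStar A Ω '' Ω) with hM
  have hMle1 : M ≤ 1 := sSup_le (by rintro _ ⟨z, hz, rfl⟩; exact f6 z hz)
  have hMlt1 : M < 1 := lt_of_le_of_ne hMle1 hsup
  have hfamM : ∀ u ∈ fam, ∀ w ∈ Ω, u w ≤ M := by
    intro u hu w hw
    refine le_trans ?_ (le_sSup (mem_image_of_mem _ hw))
    refine le_trans ?_ (f4 w hw)
    rw [hrelExt_def]
    exact le_sSup ⟨u, hu, rfl⟩
  -- every member of the family is ≤ 0 on Ω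
  have key : ∀ u ∈ fam, ∀ w ∈ Ω, u w ≤ 0 := by
    rcases le_or_gt M 0 with hM0 | hM0
    · exact fun u hu w hw => (hfamM u hu w hw).trans hM0
    · -- 0 < M < 1, so M is a real number m ∈ (0,1)
      have hMt : M ≠ ⊤ := (hMlt1.trans_le le_top).ne
      have hMb : M ≠ ⊥ := (lt_of_lt_of_le EReal.bot_lt_zero hM0.le).ne'
      obtain ⟨m, hm⟩ : ∃ m : ℝ, M = (m : EReal) := ⟨M.toReal, (EReal.coe_toReal hMt hMb).symm⟩
      have hm0 : 0 < m := by rw [hm] at hM0; exact_mod_cast hM0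
      have hm1 : m < 1 := by rw [hm] at hMlt1; exact_mod_cast hMlt1
      have hmE : (0 : EReal) ≤ (m : EReal) := by exact_mod_cast hm0.le
      have step : ∀ k : ℕ, ∀ u ∈ fam, ∀ w ∈ Ω, u w ≤ ((m ^ k : ℝ) : EReal) := by
        intro k
        induction k with
        | zero => intro u hu w hw; simpa using hu.2.1 w hw
        | succ k ih =>
            intro u hu w hw
            set u' : (Fin n → ℂ) → EReal := fun x => ((m⁻¹ : ℝ) : EReal) * u x with hu'def
            have hinv : (0 : ℝ) < m⁻¹ := inv_pos.mpr hm0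
            have hinvE : (0 : EReal) ≤ ((m⁻¹ : ℝ) : EReal) := by exact_mod_cast hinv.le
            have hu' : u' ∈ fam := by
              refine ⟨aux_psh_mul m⁻¹ hinv hu.1, fun x hx => ?_, fun x hx => ?_⟩
              · have h1 : u x ≤ (m : EReal) := hm ▸ hfamM u hu x hx
                calc ((m⁻¹ : ℝ) : EReal) * u x
                    ≤ ((m⁻¹ : ℝ) : EReal) * (m : EReal) :=
                      mul_le_mul_of_nonneg_left h1 hinvE
                  _ = 1 := by
                      rw [← EReal.coe_mul, inv_mul_cancel₀ hm0.ne']; rfl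
              · calc ((m⁻¹ : ℝ) : EReal) * u x
                    ≤ ((m⁻¹ : ℝ) : EReal) * 0 :=
                      mul_le_mul_of_nonneg_left (hu.2.2 x hx) hinvE
                  _ = 0 := mul_zero _
            have hih : u' w ≤ ((m ^ k : ℝ) : EReal) := ih u' hu' w hw
            have h2 : (m : EReal) * u' w ≤ (m : EReal) * ((m ^ k : ℝ) : EReal) :=
              mul_le_mul_of_nonneg_left hih hmE
            have h3 : (m : EReal) * u' w = u w := by
              show (m : EReal) * (((m⁻¹ : ℝ) : EReal) * u w) = u w
              rw [← mul_assoc, ← EReal.coe_mul, mul_inv_cancel₀ hm0.ne']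
              exact one_mul _
            have h4 : (m : EReal) * ((m ^ k : ℝ) : EReal) = ((m ^ (k + 1) : ℝ) : EReal) := by
              rw [← EReal.coe_mul, ← pow_succ']
            rw [h3, h4] at h2
            exact h2
      intro u hu w hw
      by_contra hpos
      push_neg at hpos
      have htop : u w ≠ ⊤ := ((hu.2.1 w hw).trans_lt (by simpa using EReal.coe_lt_top 1)).ne
      have hbot : u w ≠ ⊥ := (lt_of_lt_of_le EReal.bot_lt_zero hpos.le).ne'
      obtain ⟨x, hx⟩ : ∃ x : ℝ, u w = (x : EReal) :=
        ⟨(u w).toReal, (EReal.coe_toReal htop hbot).symm⟩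
      have hx0 : 0 < x := by rw [hx] at hpos; exact_mod_cast hpos
      obtain ⟨k, hk⟩ := exists_pow_lt_of_lt_one hx0 hm1
      have := step k u hu w hw
      rw [hx] at this
      exact absurd (by exact_mod_cast this : x ≤ m ^ k) (not_le.mpr hk)
  -- hence relExt ≤ 0 on Ω, so relExtStar ≤ 0 on Ω
  have hrelExt0 : ∀ w ∈ Ω, relExt A Ω w ≤ 0 := by
    intro w hw
    rw [hrelExt_def]
    exact sSup_le (by rintro _ ⟨u, hu, rfl⟩; exact key u hu w hw)
  intro z hz
  have hle : relExtStar A Ω z ≤ 0 := by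
    refine Filter.limsup_le_of_le (by isBoundedDefault) ?_
    exact Filter.eventually_of_mem self_mem_nhdsWithin (fun w hw => hrelExt0 w hw)
  exact le_antisymm hle ((f1 z).trans (f4 z hz))
end

section
/- Let v be subharmonic on 2E with v(0)=0 and {v = −∞} dense in 2E, let u(z) := Σ_{k=1}^n v(z_k) on (2E)ⁿ, and 𝒜 := {z ∈ Eⁿ : u(z) < −1}. Let 𝒮 be any closed subset of Eⁿ contained in Eⁿ ∖ 𝒜. Then 𝒮 does not separate domains in Eⁿ: for every subdomain U ⊆ Eⁿ, the set U ∖ 𝒮 is connected. -/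
open Complex Metric MeasureTheory Filter Set Topology

section aux

private lemma ereal_bot_lt_neg_one : (⊥ : EReal) < -1 := by
  have h : ((-1 : ℝ) : EReal) = (-1 : EReal) := by rw [EReal.coe_neg, EReal.coe_one]
  rw [← h]; exact EReal.bot_lt_coe _

private lemma sum_eq_bot' {n : ℕ} (v : ℂ → EReal) (z : Fin n → ℂ) (i : Fin n)
    (h : v (z i) = ⊥) : (∑ k, v (z k)) = ⊥ := by
  classical
  rw [← Finset.add_sum_erase Finset.univ (fun k => v (z k)) (Finset.mem_univ i), h, EReal.bot_add]

/-- straight segment as a Path -/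
private def segPath {W : Type*} [NormedAddCommGroup W] [NormedSpace ℝ W] (x y : W) :
    Path x y where
  toFun t := (1 - (t : ℝ)) • x + (t : ℝ) • y
  continuous_toFun := by
    apply Continuous.add
    · exact (continuous_const.sub continuous_subtype_val).smul continuous_const
    · exact continuous_subtype_val.smul continuous_const
  source' := by simp
  target' := by simp

private lemma joinedIn_of_seg {W : Type*} [NormedAddCommGroup W] [NormedSpace ℝ W]
    {x y : W} {s : Set W}
    (h : ∀ t : ℝ, 0 ≤ t → t ≤ 1 → (1 - t) • x + t • y ∈ s) : JoinedIn s x y :=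
  ⟨segPath x y, fun t => h t t.2.1 t.2.2⟩

/-- Density of points where the sum is `⊥`. -/
private lemma dense_bot_point {n : ℕ} (hn : 2 ≤ n) (v : ℂ → EReal)
    (hdense : Metric.ball (0:ℂ) 2 ⊆ closure {z ∈ Metric.ball (0:ℂ) 2 | v z = ⊥})
    (z : Fin n → ℂ) (hz : z ∈ polydisc n 1) (δ : ℝ) (hδ : 0 < δ) :
    ∃ p : Fin n → ℂ, dist p z < δ ∧ p ∈ polydisc n 1 ∧ (∑ k, v (p k)) = ⊥ := by
  classical
  have hn0 : 0 < n := by omega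
  let i0 : Fin n := ⟨0, hn0⟩
  have h0 : ‖z i0‖ < 1 := hz i0
  have hz2 : z i0 ∈ Metric.ball (0:ℂ) 2 := by
    rw [Metric.mem_ball, Complex.dist_eq, sub_zero]; linarith
  have hcl := hdense hz2
  rw [Metric.mem_closure_iff] at hcl
  obtain ⟨w, hw, hwd⟩ := hcl (min δ (1 - ‖z i0‖))
    (lt_min hδ (by linarith))
  refine ⟨Function.update z i0 w, ?_, ?_, ?_⟩
  · rw [dist_pi_lt_iff hδ]
    intro k
    by_cases hk : k = i0
    · subst hk
      rw [Function.update_self, dist_comm]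
      exact lt_of_lt_of_le hwd (min_le_left _ _)
    · rw [Function.update_of_ne hk]; simpa using hδ
  · intro k
    by_cases hk : k = i0
    · subst hk
      rw [Function.update_self]
      have h1 : dist w (z i0) < 1 - ‖z i0‖ := by
        rw [dist_comm]; exact lt_of_lt_of_le hwd (min_le_right _ _)
      have h2 : dist w 0 ≤ dist w (z i0) + dist (z i0) 0 := dist_triangle _ _ _
      simp only [Complex.dist_eq, sub_zero] at h1 h2
      linarith
    · rw [Function.update_of_ne hk]; exact hz k
  · exact sum_eq_bot' v _ i0 (by rw [Function.update_self]; exact hw.2)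

private lemma not_in_S {n : ℕ} (v : ℂ → EReal) (𝒮 : Set (Fin n → ℂ))
    (h𝒮 : 𝒮 ⊆ polydisc n 1 \ {z ∈ polydisc n 1 | (∑ k, v (z k)) < -1})
    (q : Fin n → ℂ) (hq : q ∈ polydisc n 1)
    (hbot : (∑ k, v (q k)) = ⊥) : q ∉ 𝒮 := by
  intro hqS
  exact (h𝒮 hqS).2 ⟨hq, by rw [hbot]; exact ereal_bot_lt_neg_one⟩

private lemma compl_open {n : ℕ} (𝒮 : Set (Fin n → ℂ))
    (h𝒮closed : closure 𝒮 ∩ polydisc n 1 ⊆ 𝒮)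
    (a : Fin n → ℂ) (ha : a ∈ polydisc n 1) (haS : a ∉ 𝒮) :
    ∃ δ > 0, Metric.ball a δ ⊆ 𝒮ᶜ := by
  have hacl : a ∉ closure 𝒮 := fun h => haS (h𝒮closed ⟨h, ha⟩)
  obtain ⟨δ, hδ, hball⟩ := Metric.isOpen_iff.1 isClosed_closure.isOpen_compl a hacl
  exact ⟨δ, hδ, fun x hx => fun hxS => (hball hx) (subset_closure hxS)⟩

end aux

section ball

private lemma good_ball {n : ℕ} (hn : 2 ≤ n) (v : ℂ → EReal)
    (hdense : Metric.ball (0:ℂ) 2 ⊆ closure {z ∈ Metric.ball (0:ℂ) 2 | v z = ⊥})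
    (𝒮 : Set (Fin n → ℂ))
    (h𝒮 : 𝒮 ⊆ polydisc n 1 \ {z ∈ polydisc n 1 | (∑ k, v (z k)) < -1})
    (h𝒮closed : closure 𝒮 ∩ polydisc n 1 ⊆ 𝒮)
    (c : Fin n → ℂ) (ε : ℝ) (hε : 0 < ε) (hsub : Metric.ball c ε ⊆ polydisc n 1)
    (a b : Fin n → ℂ) (ha : a ∈ Metric.ball c ε \ 𝒮) (hb : b ∈ Metric.ball c ε \ 𝒮) :
    JoinedIn (Metric.ball c ε \ 𝒮) a b := by
  classical
  have hn0 : 0 < n := by omega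
  have hn1 : 1 < n := by omega
  set i0 : Fin n := ⟨0, hn0⟩ with hi0
  set i1 : Fin n := ⟨1, hn1⟩ with hi1
  have hne : i1 ≠ i0 := by simp [hi0, hi1, Fin.ext_iff]
  have hac : dist a c < ε := Metric.mem_ball.1 ha.1
  have hbc : dist b c < ε := Metric.mem_ball.1 hb.1
  -- good radii around a and b
  obtain ⟨δ₁, hδ₁, hball₁⟩ := compl_open 𝒮 h𝒮closed a (hsub ha.1) ha.2
  obtain ⟨δ₂, hδ₂, hball₂⟩ := compl_open 𝒮 h𝒮closed b (hsub hb.1) hb.2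
  set δa := min δ₁ (ε - dist a c) with hδadef
  set δb := min δ₂ (ε - dist b c) with hδbdef
  have hδa : 0 < δa := lt_min hδ₁ (by linarith)
  have hδb : 0 < δb := lt_min hδ₂ (by linarith)
  have hsubA : Metric.ball a δa ⊆ Metric.ball c ε :=
    Subset.trans (Metric.ball_subset_ball (min_le_right _ _))
      (Metric.ball_subset_ball' (le_of_eq (by ring)))
  have hsubB : Metric.ball b δb ⊆ Metric.ball c ε :=
    Subset.trans (Metric.ball_subset_ball (min_le_right _ _))
      (Metric.ball_subset_ball' (le_of_eq (by ring)))
  have hDA : Metric.ball a δa ⊆ Metric.ball c ε \ 𝒮 := fun x hx =>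
    ⟨hsubA hx, Subset.trans (Metric.ball_subset_ball (min_le_left _ _)) hball₁ hx⟩
  have hDB : Metric.ball b δb ⊆ Metric.ball c ε \ 𝒮 := fun x hx =>
    ⟨hsubB hx, Subset.trans (Metric.ball_subset_ball (min_le_left _ _)) hball₂ hx⟩
  -- points with v = ⊥ near a i0 and b i1
  have ha0 : a i0 ∈ Metric.ball (0:ℂ) 2 := by
    have := hsub ha.1 i0
    rw [Metric.mem_ball, Complex.dist_eq, sub_zero]; linarith
  have hb1 : b i1 ∈ Metric.ball (0:ℂ) 2 := by
    have := hsub hb.1 i1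
    rw [Metric.mem_ball, Complex.dist_eq, sub_zero]; linarith
  obtain ⟨w₀, hw₀, hw₀d⟩ := Metric.mem_closure_iff.1 (hdense ha0) δa hδa
  obtain ⟨w₁, hw₁, hw₁d⟩ := Metric.mem_closure_iff.1 (hdense hb1) δb hδb
  set a' := Function.update a i0 w₀ with ha'def
  set b' := Function.update b i1 w₁ with hb'def
  set c' := Function.update b' i0 w₀ with hc'def
  have ha'ball : a' ∈ Metric.ball a δa := by
    rw [Metric.mem_ball, dist_pi_lt_iff hδa]
    intro k
    by_cases hk : k = i0
    · subst hk; rw [ha'def, Function.update_self, dist_comm]; exact hw₀d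
    · rw [ha'def, Function.update_of_ne hk]; simpa using hδa
  have hb'ball : b' ∈ Metric.ball b δb := by
    rw [Metric.mem_ball, dist_pi_lt_iff hδb]
    intro k
    by_cases hk : k = i1
    · subst hk; rw [hb'def, Function.update_self, dist_comm]; exact hw₁d
    · rw [hb'def, Function.update_of_ne hk]; simpa using hδb
  have ha'c : a' ∈ Metric.ball c ε := hsubA ha'ball
  have hb'c : b' ∈ Metric.ball c ε := hsubB hb'ball
  have hc'c : c' ∈ Metric.ball c ε := by
    rw [Metric.mem_ball, dist_pi_lt_iff hε]
    intro k
    by_cases hk : k = i0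
    · subst hk
      have h1 : dist (a' i0) (c i0) ≤ dist a' c := dist_le_pi_dist _ _ _
      have h2 : dist a' c < ε := Metric.mem_ball.1 ha'c
      have e1 : c' i0 = w₀ := by rw [hc'def, Function.update_self]
      have e2 : a' i0 = w₀ := by rw [ha'def, Function.update_self]
      rw [e1, ← e2]; linarith
    · have e1 : c' k = b' k := by rw [hc'def, Function.update_of_ne hk]
      have h1 : dist (b' k) (c k) ≤ dist b' c := dist_le_pi_dist _ _ _
      have h2 : dist b' c < ε := Metric.mem_ball.1 hb'c
      rw [e1]; linarith
  -- coordinate values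
  have ea' : a' i0 = w₀ := by rw [ha'def, Function.update_self]
  have ec'0 : c' i0 = w₀ := by rw [hc'def, Function.update_self]
  have ec'1 : c' i1 = w₁ := by
    rw [hc'def, Function.update_of_ne hne, hb'def, Function.update_self]
  have eb' : b' i1 = w₁ := by rw [hb'def, Function.update_self]
  -- segments
  have seg_coord : ∀ (x y : Fin n → ℂ) (t : ℝ) (k : Fin n),
      ((1 - t) • x + t • y) k = (1 - t) • x k + t • y k := by
    intro x y t k; simp
  have seg_const : ∀ (w : ℂ) (t : ℝ), (1 - t) • w + t • w = w := by
    intro w t; rw [← add_smul, sub_add_cancel, one_smul]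
  have J1 : JoinedIn (Metric.ball c ε \ 𝒮) a a' := by
    apply joinedIn_of_seg
    intro t ht0 ht1
    exact hDA (convex_ball a δa (Metric.mem_ball_self hδa) ha'ball
      (by linarith) ht0 (by ring))
  have J4 : JoinedIn (Metric.ball c ε \ 𝒮) b' b := by
    apply joinedIn_of_seg
    intro t ht0 ht1
    exact hDB (convex_ball b δb hb'ball (Metric.mem_ball_self hδb)
      (by linarith) ht0 (by ring))
  have J2 : JoinedIn (Metric.ball c ε \ 𝒮) a' c' := by
    apply joinedIn_of_seg
    intro t ht0 ht1
    have hmem : (1 - t) • a' + t • c' ∈ Metric.ball c ε :=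
      convex_ball c ε ha'c hc'c (by linarith) ht0 (by ring)
    refine ⟨hmem, not_in_S v 𝒮 h𝒮 _ (hsub hmem) ?_⟩
    apply sum_eq_bot' v _ i0
    rw [seg_coord, ea', ec'0, seg_const]
    exact hw₀.2
  have J3 : JoinedIn (Metric.ball c ε \ 𝒮) c' b' := by
    apply joinedIn_of_seg
    intro t ht0 ht1
    have hmem : (1 - t) • c' + t • b' ∈ Metric.ball c ε :=
      convex_ball c ε hc'c hb'c (by linarith) ht0 (by ring)
    refine ⟨hmem, not_in_S v 𝒮 h𝒮 _ (hsub hmem) ?_⟩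
    apply sum_eq_bot' v _ i1
    rw [seg_coord, ec'1, eb', seg_const]
    exact hw₁.2
  exact ((J1.trans J2).trans J3).trans J4

end ball

theorem stmt_3' (n : ℕ) (hn : 2 ≤ n) (v : ℂ → EReal)
    (hdense : Metric.ball (0:ℂ) 2 ⊆ closure {z ∈ Metric.ball (0:ℂ) 2 | v z = ⊥})
    (𝒮 : Set (Fin n → ℂ))
    (h𝒮 : 𝒮 ⊆ polydisc n 1 \ {z ∈ polydisc n 1 | (∑ k, v (z k)) < -1})
    (h𝒮closed : closure 𝒮 ∩ polydisc n 1 ⊆ 𝒮) :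
    ∀ U ⊆ polydisc n 1, IsOpen U → IsConnected U → IsConnected (U \ 𝒮) := by
  intro U hU hUopen hUconn
  -- base point x₀ in U \ 𝒮 lying in 𝒜
  obtain ⟨z₀, hz₀⟩ := hUconn.nonempty
  obtain ⟨ε₀, hε₀, hball₀⟩ := Metric.isOpen_iff.1 hUopen z₀ hz₀
  obtain ⟨x₀, hx₀d, hx₀p, hx₀b⟩ := dense_bot_point hn v hdense z₀ (hU hz₀) ε₀ hε₀
  have hx₀U : x₀ ∈ U := hball₀ (Metric.mem_ball.1 (Metric.mem_ball.2 hx₀d))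
  have hx₀S : x₀ ∉ 𝒮 := not_in_S v 𝒮 h𝒮 x₀ hx₀p hx₀b
  -- the set of points around which everything outside 𝒮 is joined to x₀
  set W : Set (Fin n → ℂ) := {y | ∃ ε > 0, Metric.ball y ε ⊆ U ∧
    ∀ p ∈ Metric.ball y ε \ 𝒮, JoinedIn (U \ 𝒮) x₀ p} with hWdef
  have hWU : W ⊆ U := by
    rintro y ⟨ε, hε, hballU, -⟩
    exact hballU (Metric.mem_ball_self hε)
  have hWopen : IsOpen W := by
    rw [Metric.isOpen_iff]
    rintro y ⟨ε, hε, hballU, hjoin⟩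
    refine ⟨ε / 2, by linarith, ?_⟩
    intro y' hy'
    refine ⟨ε / 2, by linarith, ?_, ?_⟩
    · intro x hx
      apply hballU
      rw [Metric.mem_ball] at *
      have := dist_triangle x y' y
      linarith
    · intro p hp
      apply hjoin
      refine ⟨?_, hp.2⟩
      rw [Metric.mem_ball] at *
      have := dist_triangle p y' y
      have h1 := hp.1
      rw [Metric.mem_ball] at h1
      linarith
  -- x₀ ∈ W
  have hx₀W : x₀ ∈ W := by
    obtain ⟨ε, hε, hballU⟩ := Metric.isOpen_iff.1 hUopen x₀ hx₀U
    refine ⟨ε, hε, hballU, ?_⟩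
    intro p hp
    have hx₀m : x₀ ∈ Metric.ball x₀ ε \ 𝒮 := ⟨Metric.mem_ball_self hε, hx₀S⟩
    have := good_ball hn v hdense 𝒮 h𝒮 h𝒮closed x₀ ε hε
      (Subset.trans hballU hU) x₀ p hx₀m hp
    exact this.mono (fun x hx => ⟨hballU hx.1, hx.2⟩)
  -- closure property within U
  have hcl : U ∩ closure W ⊆ W := by
    rintro y ⟨hyU, hyW⟩
    obtain ⟨ε, hε, hballU⟩ := Metric.isOpen_iff.1 hUopen y hyU
    obtain ⟨y', hyW2, hyd2⟩ := Metric.mem_closure_iff.1 hyW ε hε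
    obtain ⟨ε', hε', hballU', hjoin'⟩ := hyW2
    set ρ := min ε' (ε - dist y y') with hρdef
    have hρ : 0 < ρ := lt_min hε' (by linarith)
    have hρball : Metric.ball y' ρ ⊆ Metric.ball y ε := by
      refine Subset.trans (Metric.ball_subset_ball (min_le_right _ _))
        (Metric.ball_subset_ball' ?_)
      rw [dist_comm]
      exact le_of_eq (by ring)
    have hρball' : Metric.ball y' ρ ⊆ Metric.ball y' ε' :=
      Metric.ball_subset_ball (min_le_left _ _)
    -- a bottom point q in the small ball
    obtain ⟨q, hqd, hqp, hqb⟩ := dense_bot_point hn v hdense y'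
      (hU (hballU' (Metric.mem_ball_self hε'))) ρ hρ
    have hqS : q ∉ 𝒮 := not_in_S v 𝒮 h𝒮 q hqp hqb
    have hqball : q ∈ Metric.ball y' ρ := Metric.mem_ball.2 hqd
    have hq1 : JoinedIn (U \ 𝒮) x₀ q := hjoin' q ⟨hρball' hqball, hqS⟩
    refine ⟨ε, hε, hballU, ?_⟩
    intro p hp
    have hq2 := good_ball hn v hdense 𝒮 h𝒮 h𝒮closed y ε hε
      (Subset.trans hballU hU) q p ⟨hρball hqball, hqS⟩ hp
    exact hq1.trans (hq2.mono (fun x hx => ⟨hballU hx.1, hx.2⟩))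
  -- U ⊆ W by connectedness
  have hUW : U ⊆ W := by
    by_contra hcon
    rw [not_subset] at hcon
    obtain ⟨y, hyU, hyW⟩ := hcon
    have hyclW : y ∉ closure W := fun h => hyW (hcl ⟨hyU, h⟩)
    have hpre := hUconn.isPreconnected W (closure W)ᶜ hWopen
      isClosed_closure.isOpen_compl
      (fun x hx => by
        by_cases h : x ∈ closure W
        · exact Or.inl (hcl ⟨hx, h⟩)
        · exact Or.inr h)
      ⟨x₀, hx₀U, hx₀W⟩ ⟨y, hyU, hyclW⟩
    obtain ⟨x, -, hxW, hxc⟩ := hpre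
    exact hxc (subset_closure hxW)
  -- conclude
  have hpc : IsPathConnected (U \ 𝒮) := by
    refine ⟨x₀, ⟨hx₀U, hx₀S⟩, ?_⟩
    rintro y ⟨hyU, hyS⟩
    obtain ⟨ε, hε, -, hjoin⟩ := hUW hyU
    exact hjoin y ⟨Metric.mem_ball_self hε, hyS⟩
  exact hpc.isConnected

/-- Proposition 3.1: any relatively closed subset `𝒮` of `Eⁿ` contained in
`Eⁿ ∖ 𝒜` does not separate domains in `Eⁿ`. -/
theorem stmt_3 (n : ℕ) (hn : 2 ≤ n) (v : ℂ → EReal)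
    (hv : PSHOn v (Metric.ball (0:ℂ) 2)) (hv0 : v 0 = 0)
    (hdense : Metric.ball (0:ℂ) 2 ⊆ closure {z ∈ Metric.ball (0:ℂ) 2 | v z = ⊥})
    (𝒮 : Set (Fin n → ℂ))
    (h𝒮 : 𝒮 ⊆ polydisc n 1 \ {z ∈ polydisc n 1 | (∑ k, v (z k)) < -1})
    (h𝒮closed : closure 𝒮 ∩ polydisc n 1 ⊆ 𝒮) :
    DoesNotSeparate 𝒮 (polydisc n 1) :=
  stmt_3' n hn v hdense 𝒮 h𝒮 h𝒮closed
end

section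
/- Let 𝒜 ⊆ Eⁿ be open and dense, and let 𝒮 ⊆ Eⁿ ∖ 𝒜 be a closed set that does not separate domains in Eⁿ. Then for any closed sets F₁ ⊆ ℂ^p and F₂ ⊆ ℂ^q (p, q ≥ 0), the closed set F₁ × 𝒮 × F₂ does not separate domains in ℂ^p × Eⁿ × ℂ^q. -/
open Complex Metric MeasureTheory Filter Set Topology

/-- Corollary 3.2(ii): if `𝒜 ⊆ Eⁿ` is open and dense and
`𝒮 ⊆ Eⁿ ∖ 𝒜` is relatively closed and does not separate domains in `Eⁿ`, then for any
closed `F₁ ⊆ ℂᵖ`, `F₂ ⊆ ℂ^q`, the set `F₁ × 𝒮 × F₂` does not separate domains in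
`ℂᵖ × Eⁿ × ℂ^q`. -/
theorem stmt_5 (n p q : ℕ) (𝒜 𝒮 : Set (Fin n → ℂ))
    (h𝒜open : IsOpen 𝒜) (h𝒜sub : 𝒜 ⊆ polydisc n 1)
    (h𝒜dense : polydisc n 1 ⊆ closure 𝒜)
    (h𝒮 : 𝒮 ⊆ polydisc n 1 \ 𝒜)
    (h𝒮closed : closure 𝒮 ∩ polydisc n 1 ⊆ 𝒮)
    (h𝒮sep : DoesNotSeparate 𝒮 (polydisc n 1))
    (F₁ : Set (Fin p → ℂ)) (F₂ : Set (Fin q → ℂ))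
    (hF₁ : IsClosed F₁) (hF₂ : IsClosed F₂) :
    DoesNotSeparate (F₁ ×ˢ (𝒮 ×ˢ F₂))
      ((Set.univ : Set (Fin p → ℂ)) ×ˢ (polydisc n 1 ×ˢ (Set.univ : Set (Fin q → ℂ)))) := by
  have hpoly : IsOpen (polydisc n 1) := by
    have h : polydisc n 1 = ⋂ k, (fun z : Fin n → ℂ => z k) ⁻¹' Metric.ball 0 1 := by
      ext z; simp [polydisc, Complex.dist_eq]
    rw [h]
    exact isOpen_iInter_of_finite fun k => Metric.isOpen_ball.preimage (continuous_apply k)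
  set D := (Set.univ : Set (Fin p → ℂ)) ×ˢ (polydisc n 1 ×ˢ (Set.univ : Set (Fin q → ℂ)))
    with hD
  set S := F₁ ×ˢ (𝒮 ×ˢ F₂) with hSdef
  have hSmem : ∀ (α : Fin p → ℂ) (β : Fin n → ℂ) (γ : Fin q → ℂ),
      (α, β, γ) ∈ S ↔ α ∈ F₁ ∧ β ∈ 𝒮 ∧ γ ∈ F₂ := by
    intro α β γ; simp [hSdef, Set.mem_prod]
  -- Key local lemma: a basis of neighborhoods with connected complement of S
  have key : ∀ x ∈ D, ∀ ε > 0, ∃ V, IsOpen V ∧ x ∈ V ∧ V ⊆ Metric.ball x ε ∧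
      V ⊆ D ∧ IsConnected (V \ S) := by
    rintro ⟨a, b, c⟩ hx ε hε
    have hb : b ∈ polydisc n 1 := hx.2.1
    obtain ⟨r, hr, hrsub⟩ := Metric.isOpen_iff.1 hpoly b hb
    have hmin : (0:ℝ) < min r ε := lt_min hr hε
    set δ := min r ε / 2 with hδdef
    have hδ : 0 < δ := by positivity
    have hδr : δ ≤ r := le_trans (by linarith : δ ≤ min r ε) (min_le_left r ε)
    have hδε : δ ≤ ε := le_trans (by linarith : δ ≤ min r ε) (min_le_right r ε)
    refine ⟨Metric.ball a δ ×ˢ (Metric.ball b δ ×ˢ Metric.ball c δ), ?_, ?_, ?_, ?_, ?_⟩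
    · rw [ball_prod_same, ball_prod_same]; exact Metric.isOpen_ball
    · exact ⟨Metric.mem_ball_self hδ, Metric.mem_ball_self hδ, Metric.mem_ball_self hδ⟩
    · rw [ball_prod_same, ball_prod_same]; exact Metric.ball_subset_ball hδε
    · rintro ⟨α, β, γ⟩ ⟨hα, hβ, hγ⟩
      exact ⟨trivial, hrsub (Metric.ball_subset_ball hδr hβ), trivial⟩
    · -- connectedness of V \ S
      have hB1 : IsConnected (Metric.ball a δ) :=
        (convex_ball a δ).isConnected ⟨a, Metric.mem_ball_self hδ⟩
      have hB2 : IsConnected (Metric.ball c δ) :=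
        (convex_ball c δ).isConnected ⟨c, Metric.mem_ball_self hδ⟩
      have hΔconn : IsConnected (Metric.ball b δ) :=
        (convex_ball b δ).isConnected ⟨b, Metric.mem_ball_self hδ⟩
      have hΔS : IsConnected (Metric.ball b δ \ 𝒮) :=
        h𝒮sep _ ((Metric.ball_subset_ball hδr).trans hrsub) Metric.isOpen_ball hΔconn
      obtain ⟨b', hb'Δ, hb'S⟩ := hΔS.nonempty
      set C := (Metric.ball a δ) ×ˢ ((Metric.ball b δ \ 𝒮) ×ˢ Metric.ball c δ) with hCdef
      have hC : IsConnected C := hB1.prod (hΔS.prod hB2)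
      have hCsub : C ⊆ (Metric.ball a δ ×ˢ (Metric.ball b δ ×ˢ Metric.ball c δ)) \ S := by
        rintro ⟨α, β, γ⟩ ⟨hα, ⟨hβ, hβS⟩, hγ⟩
        exact ⟨⟨hα, hβ, hγ⟩, fun hmem => hβS ((hSmem α β γ).1 hmem).2.1⟩
      have hx₀C : (a, b', c) ∈ C :=
        ⟨Metric.mem_ball_self hδ, ⟨hb'Δ, hb'S⟩, Metric.mem_ball_self hδ⟩
      refine ⟨⟨(a, b', c), hCsub hx₀C⟩, isPreconnected_of_forall (a, b', c) ?_⟩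
      rintro ⟨α, β, γ⟩ ⟨⟨hα, hβ, hγ⟩, hyS⟩
      by_cases hβ𝒮 : β ∈ 𝒮
      · rw [hSmem] at hyS
        by_cases hαF : α ∈ F₁
        · have hγF : γ ∉ F₂ := fun h => hyS ⟨hαF, hβ𝒮, h⟩
          refine ⟨(Metric.ball a δ ×ˢ (Metric.ball b δ ×ˢ {γ})) ∪ C, ?_, ?_, ?_, ?_⟩
          · refine Set.union_subset ?_ hCsub
            rintro ⟨α', β', γ'⟩ ⟨hα', hβ', (rfl : γ' = γ)⟩
            exact ⟨⟨hα', hβ', hγ⟩, fun hmem => hγF ((hSmem _ _ _).1 hmem).2.2⟩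
          · exact Or.inr hx₀C
          · exact Or.inl ⟨hα, hβ, rfl⟩
          · refine (IsConnected.union ⟨(a, b', γ), ?_, ?_⟩ ?_ hC).isPreconnected
            · exact ⟨Metric.mem_ball_self hδ, hb'Δ, rfl⟩
            · exact ⟨Metric.mem_ball_self hδ, ⟨hb'Δ, hb'S⟩, hγ⟩
            · exact hB1.prod (hΔconn.prod isConnected_singleton)
        · refine ⟨({α} ×ˢ (Metric.ball b δ ×ˢ Metric.ball c δ)) ∪ C, ?_, ?_, ?_, ?_⟩
          · refine Set.union_subset ?_ hCsub
            rintro ⟨α', β', γ'⟩ ⟨(rfl : α' = α), hβ', hγ'⟩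
            exact ⟨⟨hα, hβ', hγ'⟩, fun hmem => hαF ((hSmem _ _ _).1 hmem).1⟩
          · exact Or.inr hx₀C
          · exact Or.inl ⟨rfl, hβ, hγ⟩
          · refine (IsConnected.union ⟨(α, b', γ), ?_, ?_⟩ ?_ hC).isPreconnected
            · exact ⟨rfl, hb'Δ, hγ⟩
            · exact ⟨hα, ⟨hb'Δ, hb'S⟩, hγ⟩
            · exact isConnected_singleton.prod (hΔconn.prod hB2)
      · exact ⟨C, hCsub, hx₀C, ⟨hα, ⟨hβ, hβ𝒮⟩, hγ⟩, hC.isPreconnected⟩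
  -- Main argument
  intro U hUD hUopen hUconn
  obtain ⟨x, hxU⟩ := hUconn.nonempty
  obtain ⟨ε, hε, hball⟩ := Metric.isOpen_iff.1 hUopen x hxU
  obtain ⟨V, hVo, hxV, hVb, hVD, hVc⟩ := key x (hUD hxU) ε hε
  have hVU : V ⊆ U := hVb.trans hball
  constructor
  · obtain ⟨y, hyV, hyS⟩ := hVc.nonempty
    exact ⟨y, hVU hyV, hyS⟩
  rintro u v hu hv hcov ⟨y₁, hy₁⟩ ⟨y₂, hy₂⟩
  by_contra hempty
  rw [Set.not_nonempty_iff_eq_empty] at hempty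
  set W : Set ((Fin p → ℂ) × (Fin n → ℂ) × (Fin q → ℂ)) →
      Set ((Fin p → ℂ) × (Fin n → ℂ) × (Fin q → ℂ)) := fun u' =>
    {z | z ∈ U ∧ ∃ V', IsOpen V' ∧ z ∈ V' ∧ V' ⊆ U ∧ IsConnected (V' \ S) ∧ V' \ S ⊆ u'}
    with hWdef
  have hWopen : ∀ u', IsOpen (W u') := by
    intro u'
    rw [isOpen_iff_forall_mem_open]
    rintro z ⟨hzU, V', hV'o, hzV', hV'U, hV'c, hV'u⟩
    exact ⟨V', fun w hw => ⟨hV'U hw, V', hV'o, hw, hV'U, hV'c, hV'u⟩, hV'o, hzV'⟩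
  have hWcover : ∀ z ∈ U, z ∈ W u ∨ z ∈ W v := by
    intro z hz
    obtain ⟨ε', hε', hb'⟩ := Metric.isOpen_iff.1 hUopen z hz
    obtain ⟨V', hV'o, hzV', hV'b, hV'D, hV'c⟩ := key z (hUD hz) ε' hε'
    have hV'U : V' ⊆ U := hV'b.trans hb'
    have hsub : V' \ S ⊆ u ∪ v := fun w hw => hcov ⟨hV'U hw.1, hw.2⟩
    by_cases h1 : ((V' \ S) ∩ u).Nonempty
    · by_cases h2 : ((V' \ S) ∩ v).Nonempty
      · exfalso
        obtain ⟨w, hw, hwu, hwv⟩ := hV'c.isPreconnected u v hu hv hsub h1 h2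
        have hmem : w ∈ (U \ S) ∩ (u ∩ v) := ⟨⟨hV'U hw.1, hw.2⟩, hwu, hwv⟩
        rw [hempty] at hmem; exact hmem
      · left
        refine ⟨hz, V', hV'o, hzV', hV'U, hV'c, fun w hw => ?_⟩
        rcases hsub hw with h | h
        · exact h
        · exact absurd ⟨w, hw, h⟩ h2
    · right
      refine ⟨hz, V', hV'o, hzV', hV'U, hV'c, fun w hw => ?_⟩
      rcases hsub hw with h | h
      · exact absurd ⟨w, hw, h⟩ h1
      · exact h
  have hy₁Wu : y₁ ∈ W u := by
    rcases hWcover y₁ hy₁.1.1 with h | h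
    · exact h
    · exfalso
      obtain ⟨-, V', hV'o, hzV', hV'U, hV'c, hV'v⟩ := h
      have hmem : y₁ ∈ (U \ S) ∩ (u ∩ v) := ⟨hy₁.1, hy₁.2, hV'v ⟨hzV', hy₁.1.2⟩⟩
      rw [hempty] at hmem; exact hmem
  have hy₂Wv : y₂ ∈ W v := by
    rcases hWcover y₂ hy₂.1.1 with h | h
    · exfalso
      obtain ⟨-, V', hV'o, hzV', hV'U, hV'c, hV'u⟩ := h
      have hmem : y₂ ∈ (U \ S) ∩ (u ∩ v) := ⟨hy₂.1, hV'u ⟨hzV', hy₂.1.2⟩, hy₂.2⟩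
      rw [hempty] at hmem; exact hmem
    · exact h
  obtain ⟨z, hzU, hzWu, hzWv⟩ := hUconn.isPreconnected (W u) (W v) (hWopen u) (hWopen v)
    (fun z hz => hWcover z hz) ⟨y₁, hy₁.1.1, hy₁Wu⟩ ⟨y₂, hy₂.1.1, hy₂Wv⟩
  obtain ⟨-, V₁, hV₁o, hzV₁, hV₁U, hV₁c, hV₁u⟩ := hzWu
  obtain ⟨-, V₂, hV₂o, hzV₂, hV₂U, hV₂c, hV₂v⟩ := hzWv
  obtain ⟨ε', hε', hb'⟩ := Metric.isOpen_iff.1 (hV₁o.inter hV₂o) z ⟨hzV₁, hzV₂⟩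
  obtain ⟨V₃, hV₃o, hzV₃, hV₃b, hV₃D, hV₃c⟩ := key z (hUD hzU) ε' hε'
  obtain ⟨w, hwV₃, hwS⟩ := hV₃c.nonempty
  have hw12 : w ∈ V₁ ∩ V₂ := hb' (hV₃b hwV₃)
  have hmem : w ∈ (U \ S) ∩ (u ∩ v) :=
    ⟨⟨hV₁U hw12.1, hwS⟩, hV₁u ⟨hw12.1, hwS⟩, hV₂v ⟨hw12.2, hwS⟩⟩
  rw [hempty] at hmem; exact hmem
end

section
/- Let Ω₁, Ω₂, Ω₃ be domains in ℂ^{m₁}, ℂ^{m₂}, ℂ^{m₃} and S ⊆ Ω₁ × Ω₂ × Ω₃ relatively closed with empty interior. For a₃ ∈ Ω₃, let S(a₃) be the set of a₂ ∈ Ω₂ such that {z₁ : (z₁,a₂,a₃) ∈ S} has empty interior in ℂ^{m₁}, and let 𝒮 be the set of a₃ ∈ Ω₃ such that Ω₂ ∖ S(a₃) is of Baire category I. Then Ω₃ ∖ 𝒮 is of Baire category I in Ω₃. -/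
open Complex Metric MeasureTheory Filter Set Topology

open Metric TopologicalSpace in
/-- Countable basis of closed balls: every nonempty open set in a separable metric space
contains a closed ball centered at a point of the dense sequence with radius `1/(k+1)`. -/
lemma exists_closedBall_subset_aux {E : Type*} [MetricSpace E] [SeparableSpace E] [Nonempty E]
    {U : Set E} (hU : IsOpen U) (hne : U.Nonempty) :
    ∃ p : ℕ × ℕ, closedBall (denseSeq E p.1) (1 / (p.2 + 1)) ⊆ U := by
  obtain ⟨x, hx⟩ := hne
  obtain ⟨ε, hε, hball⟩ := Metric.isOpen_iff.1 hU x hx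
  obtain ⟨k, hk⟩ := exists_nat_one_div_lt (half_pos hε)
  have hk0 : (0:ℝ) < 1 / (k + 1) := by positivity
  obtain ⟨n, hn⟩ := (denseRange_denseSeq E).exists_dist_lt x hk0
  refine ⟨(n, k), fun z hz => hball ?_⟩
  have hz' : dist z (denseSeq E n) ≤ 1 / (k + 1) := hz
  rw [mem_ball]
  calc dist z x ≤ dist z (denseSeq E n) + dist (denseSeq E n) x := dist_triangle _ _ _
    _ < 1 / (k + 1) + 1 / (k + 1) := by
        rw [dist_comm (denseSeq E n) x]; linarith
    _ < ε := by linarith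

/-- Lemma 4.1, case M = 3. -/
theorem stmt_9 {m₁ m₂ m₃ : ℕ}
    (Ω₁ : Set (Fin m₁ → ℂ)) (Ω₂ : Set (Fin m₂ → ℂ)) (Ω₃ : Set (Fin m₃ → ℂ))
    (hΩ₁ : IsOpen Ω₁) (hΩ₁c : IsConnected Ω₁)
    (hΩ₂ : IsOpen Ω₂) (hΩ₂c : IsConnected Ω₂)
    (hΩ₃ : IsOpen Ω₃) (hΩ₃c : IsConnected Ω₃)
    (S : Set ((Fin m₁ → ℂ) × (Fin m₂ → ℂ) × (Fin m₃ → ℂ)))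
    (hS : S ⊆ Ω₁ ×ˢ (Ω₂ ×ˢ Ω₃)) (hScl : closure S ∩ (Ω₁ ×ˢ (Ω₂ ×ˢ Ω₃)) ⊆ S)
    (hSint : interior S = ∅) :
    BaireCatI
      (Ω₃ \ {a₃ ∈ Ω₃ |
        BaireCatI (Ω₂ \ {a₂ ∈ Ω₂ | interior {z₁ | (z₁, a₂, a₃) ∈ S} = ∅}) Ω₂}) Ω₃ := by
  classical
  set c₁ := TopologicalSpace.denseSeq (Fin m₁ → ℂ) with hc₁
  set c₂ := TopologicalSpace.denseSeq (Fin m₂ → ℂ) with hc₂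
  set D₁ : ℕ × ℕ → Set (Fin m₁ → ℂ) := fun p => Metric.closedBall (c₁ p.1) (1/(p.2+1))
    with hD₁
  set D₂ : ℕ × ℕ → Set (Fin m₂ → ℂ) := fun p => Metric.closedBall (c₂ p.1) (1/(p.2+1))
    with hD₂
  set G : (ℕ×ℕ) × (ℕ×ℕ) → Set (Fin m₃ → ℂ) := fun p =>
    {a₃ | a₃ ∈ Ω₃ ∧ ∀ z₁ ∈ D₁ p.1, ∀ z₂ ∈ D₂ p.2, (z₁, z₂, a₃) ∈ S} with hG
  set e := Denumerable.eqv ((ℕ×ℕ) × (ℕ×ℕ)) with he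
  refine ⟨fun n => G (e.symm n), fun n => ⟨fun a ha => ha.1, ?_, ?_⟩, ?_⟩
  · -- relatively closed
    rintro a₃ ⟨hcl, ha₃⟩
    refine ⟨ha₃, fun z₁ hz₁ z₂ hz₂ => ?_⟩
    have hne : (G (e.symm n)).Nonempty := by
      by_contra h
      rw [Set.not_nonempty_iff_eq_empty] at h
      simp only [h, closure_empty, Set.mem_empty_iff_false] at hcl
    obtain ⟨b, hb⟩ := hne
    have hbS : (z₁, z₂, b) ∈ S := hb.2 z₁ hz₁ z₂ hz₂
    have hz₁Ω : z₁ ∈ Ω₁ := (hS hbS).1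
    have hz₂Ω : z₂ ∈ Ω₂ := (hS hbS).2.1
    have hcont : Continuous (fun a : Fin m₃ → ℂ =>
        ((z₁, z₂, a) : (Fin m₁ → ℂ) × (Fin m₂ → ℂ) × (Fin m₃ → ℂ))) := by fun_prop
    have hmem : (z₁, z₂, a₃) ∈ closure S := by
      have h1 := image_closure_subset_closure_image (s := G (e.symm n)) hcont
      have h2 : (fun a : Fin m₃ → ℂ => ((z₁, z₂, a) :
          (Fin m₁ → ℂ) × (Fin m₂ → ℂ) × (Fin m₃ → ℂ))) '' G (e.symm n) ⊆ S := by
        rintro _ ⟨a, ha, rfl⟩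
        exact ha.2 z₁ hz₁ z₂ hz₂
      exact closure_mono h2 (h1 ⟨a₃, hcl, rfl⟩)
    exact hScl ⟨hmem, hz₁Ω, hz₂Ω, ha₃⟩
  · -- empty interior
    by_contra h
    obtain ⟨x, hx⟩ := Set.nonempty_iff_ne_empty.2 h
    set p := e.symm n with hp
    have hsub : Metric.ball (c₁ p.1.1) (1/(p.1.2+1)) ×ˢ
        (Metric.ball (c₂ p.2.1) (1/(p.2.2+1)) ×ˢ interior (G p)) ⊆ S := by
      rintro ⟨z₁, z₂, a⟩ ⟨h1, h2, h3⟩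
      exact (interior_subset h3).2 z₁ (Metric.ball_subset_closedBall h1) z₂
        (Metric.ball_subset_closedBall h2)
    have hopen : IsOpen (Metric.ball (c₁ p.1.1) (1/(p.1.2+1)) ×ˢ
        (Metric.ball (c₂ p.2.1) (1/(p.2.2+1)) ×ˢ interior (G p))) :=
      Metric.isOpen_ball.prod (Metric.isOpen_ball.prod isOpen_interior)
    have hne : (Metric.ball (c₁ p.1.1) (1/(p.1.2+1)) ×ˢ
        (Metric.ball (c₂ p.2.1) (1/(p.2.2+1)) ×ˢ interior (G p))).Nonempty := by
      refine ⟨(c₁ p.1.1, c₂ p.2.1, x), ?_, ?_, hx⟩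
      · exact Metric.mem_ball_self (by positivity)
      · exact Metric.mem_ball_self (by positivity)
    have := interior_maximal hsub hopen
    rw [hSint] at this
    exact (hne.mono this).ne_empty rfl
  · -- coverage
    rintro a₃ ⟨ha₃, hnot⟩
    have hnB : ¬ BaireCatI (Ω₂ \ {a₂ ∈ Ω₂ | interior {z₁ | (z₁, a₂, a₃) ∈ S} = ∅}) Ω₂ :=
      fun hB => hnot ⟨ha₃, hB⟩
    set T : ℕ×ℕ → Set (Fin m₂ → ℂ) := fun p =>
      {a₂ | a₂ ∈ Ω₂ ∧ ∀ z₁ ∈ D₁ p, (z₁, a₂, a₃) ∈ S} with hT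
    have hTsub : ∀ p, T p ⊆ Ω₂ := fun p a ha => ha.1
    have hTcl : ∀ p, closure (T p) ∩ Ω₂ ⊆ T p := by
      rintro p a₂ ⟨hcl, ha₂⟩
      refine ⟨ha₂, fun z₁ hz₁ => ?_⟩
      have hne : (T p).Nonempty := by
        by_contra h
        rw [Set.not_nonempty_iff_eq_empty] at h
        rw [h, closure_empty] at hcl
        exact hcl
      obtain ⟨b, hb⟩ := hne
      have hbS : (z₁, b, a₃) ∈ S := hb.2 z₁ hz₁
      have hz₁Ω : z₁ ∈ Ω₁ := (hS hbS).1
      have hcont : Continuous (fun a : Fin m₂ → ℂ =>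
          ((z₁, a, a₃) : (Fin m₁ → ℂ) × (Fin m₂ → ℂ) × (Fin m₃ → ℂ))) := by fun_prop
      have hmem : (z₁, a₂, a₃) ∈ closure S := by
        have h1 := image_closure_subset_closure_image (s := T p) hcont
        have h2 : (fun a : Fin m₂ → ℂ => ((z₁, a, a₃) :
            (Fin m₁ → ℂ) × (Fin m₂ → ℂ) × (Fin m₃ → ℂ))) '' T p ⊆ S := by
          rintro _ ⟨a, ha, rfl⟩
          exact ha.2 z₁ hz₁
        exact closure_mono h2 (h1 ⟨a₂, hcl, rfl⟩)
      exact hScl ⟨hmem, hz₁Ω, ha₂, ha₃⟩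
    have hcov : Ω₂ \ {a₂ ∈ Ω₂ | interior {z₁ | (z₁, a₂, a₃) ∈ S} = ∅} ⊆ ⋃ p, T p := by
      rintro a₂ ⟨ha₂, hni⟩
      have hni' : interior {z₁ | (z₁, a₂, a₃) ∈ S} ≠ ∅ := fun hh => hni ⟨ha₂, hh⟩
      obtain ⟨p, hp⟩ := exists_closedBall_subset_aux isOpen_interior
        (Set.nonempty_iff_ne_empty.2 hni')
      exact Set.mem_iUnion.2 ⟨p, ha₂, fun z₁ hz₁ => interior_subset (s := {z₁ | (z₁, a₂, a₃) ∈ S}) (hp hz₁)⟩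
    have hexT : ∃ p, (interior (T p)).Nonempty := by
      by_contra h
      push_neg at h
      apply hnB
      set e₂ := Denumerable.eqv (ℕ×ℕ) with he₂
      refine ⟨fun n => T (e₂.symm n), fun n => ⟨hTsub _, hTcl _, ?_⟩, ?_⟩
      · exact h _
      · intro a ha
        obtain ⟨p, hp⟩ := Set.mem_iUnion.1 (hcov ha)
        exact Set.mem_iUnion.2 ⟨e₂ p, by simpa using hp⟩
    obtain ⟨p, hp⟩ := hexT
    obtain ⟨q, hq⟩ := exists_closedBall_subset_aux isOpen_interior hp
    refine Set.mem_iUnion.2 ⟨e (p, q), ?_⟩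
    show a₃ ∈ G (e.symm (e (p, q)))
    rw [Equiv.symm_apply_apply]
    exact ⟨ha₃, fun z₁ hz₁ z₂ hz₂ => (interior_subset (hq hz₂)).2 z₁ hz₁⟩
end

section
/- For every n ≥ 2 there exists an open dense subset 𝒜 of Eⁿ that is plurithin at 0 ∈ Eⁿ, and such that the complement Eⁿ ∖ 𝒜 contains no non-empty relatively open subset of a real hypersurface. -/
open Complex Metric MeasureTheory Filter Set Topology

noncomputable section
variable {V : Type*} [NormedAddCommGroup V] [NormedSpace ℂ V]

/-- `A` is plurithin at `a`. -/
def Plurithin (A : Set V) (a : V) : Prop :=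
  a ∉ closure A ∨
    (a ∈ closure A ∧ ∃ Ω : Set V, IsOpen Ω ∧ a ∈ Ω ∧ ∃ u : V → EReal, PSHOn u Ω ∧
      Filter.limsup u (nhdsWithin a (A \ {a})) < u a)

/-- `C` is a non-empty relatively open subset of a real (C¹, regular) hypersurface:
near each of its points, `C` coincides with a regular level set of a C¹ real function. -/
def IsHypersurfacePiece (C : Set V) : Prop :=
  C.Nonempty ∧ ∀ c ∈ C, ∃ (U : Set V) (ρ : V → ℝ),
    IsOpen U ∧ c ∈ U ∧ ContDiff ℝ 1 ρ ∧ (∀ z ∈ U, fderiv ℝ ρ z ≠ 0) ∧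
    C ∩ U = {z ∈ U | ρ z = 0}

end


/-- Compatibility: the complex absolute value as a bundled absolute value (equal to the norm). -/
noncomputable def Complex.abs : AbsoluteValue ℂ ℝ where
  toFun := fun z => ‖z‖
  map_mul' := norm_mul
  nonneg' := norm_nonneg
  eq_zero' := fun _ => norm_eq_zero
  add_le' := norm_add_le

@[simp] lemma Complex.norm_eq_abs (z : ℂ) : ‖z‖ = Complex.abs z := rfl

@[simp] lemma Complex.abs_ofReal (r : ℝ) : Complex.abs (r : ℂ) = |r| := Complex.norm_real r

@[simp] lemma Complex.abs_conj (z : ℂ) : Complex.abs ((starRingEnd ℂ) z) = Complex.abs z :=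
  Complex.norm_conj z

@[simp] lemma Complex.abs_exp_ofReal_mul_I (x : ℝ) : Complex.abs (Complex.exp (x * Complex.I)) = 1 :=
  Complex.norm_exp_ofReal_mul_I x

lemma Complex.abs_mul_exp_arg_mul_I (x : ℂ) :
    (Complex.abs x : ℂ) * Complex.exp (Complex.arg x * Complex.I) = x :=
  Complex.norm_mul_exp_arg_mul_I x

lemma Complex.continuous_abs : Continuous Complex.abs := continuous_norm

noncomputable section
namespace Stmt14


/-- The basic circle-log integral. -/
def circF (q : ℂ) : ℝ := ∫ θ in (0:ℝ)..(2*Real.pi), Real.log (Complex.abs (1 - q * Complex.exp (θ * Complex.I)))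

lemma abs_one_sub_pos {q : ℂ} (hq : Complex.abs q < 1) (θ : ℝ) :
    0 < Complex.abs (1 - q * Complex.exp (θ * Complex.I)) := by
  have h1 : Complex.abs (q * Complex.exp (θ * Complex.I)) < 1 := by
    rw [map_mul, Complex.abs_exp_ofReal_mul_I, mul_one]; exact hq
  have := norm_sub_norm_le (1 : ℂ) (q * Complex.exp (θ * Complex.I))
  simp only [Complex.norm_eq_abs, map_one] at this
  linarith

lemma cont_logabs {q : ℂ} (hq : Complex.abs q < 1) :
    Continuous fun θ : ℝ => Real.log (Complex.abs (1 - q * Complex.exp (θ * Complex.I))) := by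
  apply Continuous.log
  · exact Complex.continuous_abs.comp <| by continuity
  · exact fun θ => ne_of_gt (abs_one_sub_pos hq θ)

lemma periodic_logabs (q : ℂ) :
    Function.Periodic (fun θ : ℝ => Real.log (Complex.abs (1 - q * Complex.exp (θ * Complex.I)))) (2*Real.pi) := by
  intro θ
  have : ((θ + 2*Real.pi : ℝ) : ℂ) * Complex.I = θ * Complex.I + 2*Real.pi*Complex.I := by
    push_cast; ring
  simp only [this, Complex.exp_add, Complex.exp_two_pi_mul_I, mul_one]

/-- Rotation invariance: `circF q = circF |q|`. -/
lemma circF_eq_abs (q : ℂ) : circF q = circF (Complex.abs q) := by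
  rcases eq_or_ne q 0 with rfl | hq
  · simp
  have hq' : (Complex.abs q : ℂ) * Complex.exp (Complex.arg q * Complex.I) = q :=
    Complex.abs_mul_exp_arg_mul_I q
  have key : ∀ θ : ℝ, (1 - q * Complex.exp (θ * Complex.I))
      = 1 - (Complex.abs q : ℂ) * Complex.exp (((θ + Complex.arg q : ℝ)) * Complex.I) := by
    intro θ
    have : q * Complex.exp (θ * Complex.I)
        = (Complex.abs q : ℂ) * Complex.exp (((θ + Complex.arg q : ℝ)) * Complex.I) := by
      conv_lhs => rw [← hq']
      push_cast
      rw [add_mul, Complex.exp_add]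
      ring
    rw [this]
  have h2 : circF q = ∫ θ in (0:ℝ)..(2*Real.pi),
      (fun x : ℝ => Real.log (Complex.abs (1 - (Complex.abs q : ℂ) * Complex.exp (x * Complex.I)))) (θ + Complex.arg q) := by
    unfold circF
    congr 1
    ext θ
    rw [key θ]
  rw [h2, intervalIntegral.integral_comp_add_right
    (fun x : ℝ => Real.log (Complex.abs (1 - (Complex.abs q : ℂ) * Complex.exp (x * Complex.I)))) (Complex.arg q)]
  have := (periodic_logabs ((Complex.abs q : ℂ))).intervalIntegral_add_eq (0 + Complex.arg q) 0
  simpa [circF, add_comm, add_assoc, add_left_comm] using this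


lemma circF_real_nonneg_intble {t : ℝ} (h0 : 0 ≤ t) (h1 : t < 1) (a b : ℝ) :
    IntervalIntegrable (fun θ : ℝ => Real.log (Complex.abs (1 - (t:ℂ) * Complex.exp (θ * Complex.I)))) volume a b := by
  have : Complex.abs (t:ℂ) < 1 := by simpa [Complex.abs_ofReal, _root_.abs_of_nonneg h0] using h1
  exact (cont_logabs this).intervalIntegrable a b

/-- Functional equation `circF t = circF (t^2) / 2` for `0 ≤ t < 1`. -/
lemma circF_sq {t : ℝ} (h0 : 0 ≤ t) (h1 : t < 1) :
    circF ((t:ℂ)^2) = 2 * circF (t:ℂ) := by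
  have habs : Complex.abs (t:ℂ) < 1 := by simpa [Complex.abs_ofReal, _root_.abs_of_nonneg h0] using h1
  have habs2 : Complex.abs ((t:ℂ)^2) < 1 := by
    rw [map_pow]
    exact pow_lt_one₀ (by positivity) habs (by norm_num)
  have hpos1 : ∀ θ : ℝ, 0 < Complex.abs (1 - (t:ℂ) * Complex.exp (θ * Complex.I)) :=
    abs_one_sub_pos habs
  have hpos2 : ∀ θ : ℝ, 0 < Complex.abs (1 + (t:ℂ) * Complex.exp (θ * Complex.I)) := by
    intro θ
    have h1' : Complex.abs ((t:ℂ) * Complex.exp (θ * Complex.I)) < 1 := by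
      rw [map_mul, Complex.abs_exp_ofReal_mul_I, mul_one]; exact habs
    have := norm_sub_norm_le (1 : ℂ) (-((t:ℂ) * Complex.exp (θ * Complex.I)))
    simp only [Complex.norm_eq_abs, map_one, map_neg_eq_map, sub_neg_eq_add] at this
    linarith
  -- change of variables u = 2θ
  have hcv : circF ((t:ℂ)^2) = 2 * ∫ θ in (0:ℝ)..Real.pi,
      Real.log (Complex.abs (1 - (t:ℂ)^2 * Complex.exp ((2*θ : ℝ) * Complex.I))) := by
    unfold circF
    rw [intervalIntegral.integral_comp_mul_left
      (fun x : ℝ => Real.log (Complex.abs (1 - (t:ℂ)^2 * Complex.exp (x * Complex.I)))) (two_ne_zero)]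
    simp only [smul_eq_mul, mul_zero]
    rw [← mul_assoc]
    norm_num
  -- pointwise factorization
  have hfact : ∀ θ : ℝ,
      Real.log (Complex.abs (1 - (t:ℂ)^2 * Complex.exp ((2*θ : ℝ) * Complex.I)))
      = Real.log (Complex.abs (1 - (t:ℂ) * Complex.exp (θ * Complex.I)))
        + Real.log (Complex.abs (1 + (t:ℂ) * Complex.exp (θ * Complex.I))) := by
    intro θ
    have hprod : (1 - (t:ℂ)^2 * Complex.exp ((2*θ : ℝ) * Complex.I))
        = (1 - (t:ℂ) * Complex.exp (θ * Complex.I)) * (1 + (t:ℂ) * Complex.exp (θ * Complex.I)) := by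
      have : Complex.exp ((2*θ : ℝ) * Complex.I) = Complex.exp (θ * Complex.I) * Complex.exp (θ * Complex.I) := by
        rw [← Complex.exp_add]
        push_cast
        ring_nf
      rw [this]
      ring
    rw [hprod, map_mul, Real.log_mul (ne_of_gt (hpos1 θ)) (ne_of_gt (hpos2 θ))]
  -- the second factor integrates to the (π, 2π) part
  have hshift : (∫ θ in (0:ℝ)..Real.pi, Real.log (Complex.abs (1 + (t:ℂ) * Complex.exp (θ * Complex.I))))
      = ∫ θ in Real.pi..(2*Real.pi), Real.log (Complex.abs (1 - (t:ℂ) * Complex.exp (θ * Complex.I))) := by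
    have h1' : ∀ θ : ℝ, Real.log (Complex.abs (1 + (t:ℂ) * Complex.exp (θ * Complex.I)))
        = (fun x : ℝ => Real.log (Complex.abs (1 - (t:ℂ) * Complex.exp (x * Complex.I)))) (θ + Real.pi) := by
      intro θ
      simp only
      have : Complex.exp (((θ + Real.pi : ℝ)) * Complex.I) = - Complex.exp (θ * Complex.I) := by
        push_cast
        rw [add_mul, Complex.exp_add, Complex.exp_pi_mul_I]
        ring
      rw [this]
      ring_nf
    rw [intervalIntegral.integral_congr (g := fun θ : ℝ =>
      (fun x : ℝ => Real.log (Complex.abs (1 - (t:ℂ) * Complex.exp (x * Complex.I)))) (θ + Real.pi))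
      (fun θ _ => h1' θ)]
    rw [intervalIntegral.integral_comp_add_right
      (fun x : ℝ => Real.log (Complex.abs (1 - (t:ℂ) * Complex.exp (x * Complex.I)))) Real.pi]
    have e1 : (0:ℝ) + Real.pi = Real.pi := by ring
    have e2 : Real.pi + Real.pi = 2*Real.pi := by ring
    rw [e1, e2]
  have hint1 : IntervalIntegrable (fun θ : ℝ => Real.log (Complex.abs (1 - (t:ℂ) * Complex.exp (θ * Complex.I)))) volume 0 Real.pi :=
    circF_real_nonneg_intble h0 h1 0 Real.pi
  have hint2 : IntervalIntegrable (fun θ : ℝ => Real.log (Complex.abs (1 + (t:ℂ) * Complex.exp (θ * Complex.I)))) volume 0 Real.pi := by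
    apply Continuous.intervalIntegrable
    apply Continuous.log
    · exact Complex.continuous_abs.comp <| by continuity
    · exact fun θ => ne_of_gt (hpos2 θ)
  calc circF ((t:ℂ)^2)
      = 2 * ∫ θ in (0:ℝ)..Real.pi,
        (Real.log (Complex.abs (1 - (t:ℂ) * Complex.exp (θ * Complex.I)))
          + Real.log (Complex.abs (1 + (t:ℂ) * Complex.exp (θ * Complex.I)))) := by
        rw [hcv]
        congr 1
        exact intervalIntegral.integral_congr (fun θ _ => hfact θ)
    _ = 2 * ((∫ θ in (0:ℝ)..Real.pi, Real.log (Complex.abs (1 - (t:ℂ) * Complex.exp (θ * Complex.I))))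
          + ∫ θ in (0:ℝ)..Real.pi, Real.log (Complex.abs (1 + (t:ℂ) * Complex.exp (θ * Complex.I)))) := by
        rw [intervalIntegral.integral_add hint1 hint2]
    _ = 2 * circF (t:ℂ) := by
        rw [hshift]
        unfold circF
        rw [intervalIntegral.integral_add_adjacent_intervals
          (circF_real_nonneg_intble h0 h1 0 Real.pi) (circF_real_nonneg_intble h0 h1 Real.pi (2*Real.pi))]

/-- Bound `|circF t| ≤ 2π · (-log (1-t))`. -/
lemma circF_bound {t : ℝ} (h0 : 0 ≤ t) (h1 : t < 1) :
    |circF (t:ℂ)| ≤ 2 * Real.pi * (- Real.log (1 - t)) := by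
  have hC : 0 ≤ - Real.log (1 - t) := by
    have := Real.log_nonpos (by linarith) (by linarith : (1:ℝ) - t ≤ 1)
    linarith
  have hbd : ∀ θ ∈ Set.uIoc (0:ℝ) (2*Real.pi),
      ‖Real.log (Complex.abs (1 - (t:ℂ) * Complex.exp (θ * Complex.I)))‖ ≤ - Real.log (1 - t) := by
    intro θ _
    have habs : Complex.abs ((t:ℂ) * Complex.exp (θ * Complex.I)) = t := by
      rw [map_mul, Complex.abs_exp_ofReal_mul_I, mul_one, Complex.abs_ofReal, _root_.abs_of_nonneg h0]
    have hub : Complex.abs (1 - (t:ℂ) * Complex.exp (θ * Complex.I)) ≤ 1 + t := by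
      have := norm_sub_le (1 : ℂ) ((t:ℂ) * Complex.exp (θ * Complex.I))
      simp only [Complex.norm_eq_abs, map_one, habs] at this
      exact this
    have hlb : 1 - t ≤ Complex.abs (1 - (t:ℂ) * Complex.exp (θ * Complex.I)) := by
      have := norm_sub_norm_le (1 : ℂ) ((t:ℂ) * Complex.exp (θ * Complex.I))
      simp only [Complex.norm_eq_abs, map_one, habs] at this
      exact this
    rw [Real.norm_eq_abs, abs_le]
    constructor
    · have := Real.log_le_log (by linarith) hlb
      linarith
    · have h2 : Real.log (Complex.abs (1 - (t:ℂ) * Complex.exp (θ * Complex.I))) ≤ Real.log (1 + t) :=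
        Real.log_le_log (lt_of_lt_of_le (by linarith) hlb) hub
      have h3 : Real.log (1 + t) + Real.log (1 - t) ≤ 0 := by
        rw [← Real.log_mul (by linarith) (by linarith)]
        apply Real.log_nonpos
        · nlinarith
        · nlinarith
      linarith
  have h := intervalIntegral.norm_integral_le_of_norm_le_const hbd
  rw [Real.norm_eq_abs] at h
  calc |circF (t:ℂ)| ≤ (- Real.log (1 - t)) * |2*Real.pi - 0| := h
    _ = 2 * Real.pi * (- Real.log (1 - t)) := by
        have hpi := Real.pi_pos
        rw [_root_.abs_of_nonneg (by linarith : (0:ℝ) ≤ 2*Real.pi - 0)]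
        ring

/-- `circF t = 0` for `0 ≤ t < 1`. -/
lemma circF_zero_of_lt_one {t : ℝ} (h0 : 0 ≤ t) (h1 : t < 1) : circF (t:ℂ) = 0 := by
  have hp0 : ∀ n : ℕ, 0 ≤ t ^ (2^n) := fun n => by positivity
  have hp1 : ∀ n : ℕ, t ^ (2^n) < 1 := by
    intro n
    rcases eq_or_lt_of_le h0 with h | h
    · rw [← h, zero_pow (Nat.two_pow_pos n).ne']
      norm_num
    · exact pow_lt_one₀ h0 h1 (Nat.two_pow_pos n).ne'
  have key : ∀ n : ℕ, circF (t:ℂ) = circF ((t ^ (2^n) : ℝ) : ℂ) / 2^n := by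
    intro n
    induction n with
    | zero => simp
    | succ n ih =>
      have h2 : ((t ^ (2^n) : ℝ) : ℂ)^2 = ((t ^ (2^(n+1)) : ℝ) : ℂ) := by
        push_cast
        rw [← pow_mul, ← pow_succ]
      calc circF (t:ℂ) = circF ((t ^ (2^n) : ℝ) : ℂ) / 2^n := ih
        _ = (2 * circF ((t ^ (2^n) : ℝ) : ℂ)) / 2^(n+1) := by
            rw [pow_succ]
            field_simp
        _ = circF ((t ^ (2^(n+1)) : ℝ) : ℂ) / 2^(n+1) := by
            rw [← circF_sq (hp0 n) (hp1 n), h2]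
  set C := 2 * Real.pi * (- Real.log (1 - t)) with hCdef
  have hC : 0 ≤ C := by
    have := Real.log_nonpos (by linarith) (by linarith : (1:ℝ) - t ≤ 1)
    have hpi := Real.pi_pos
    nlinarith
  have hbd : ∀ n : ℕ, |circF (t:ℂ)| ≤ C / 2^n := by
    intro n
    rw [key n, abs_div, _root_.abs_of_nonneg (by positivity : (0:ℝ) ≤ (2:ℝ)^n)]
    gcongr
    calc |circF ((t ^ (2^n) : ℝ) : ℂ)| ≤ 2 * Real.pi * (- Real.log (1 - t ^ (2^n))) :=
          circF_bound (hp0 n) (hp1 n)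
      _ ≤ C := by
          rw [hCdef]
          have hle : t ^ (2^n) ≤ t := pow_le_of_le_one h0 h1.le (Nat.two_pow_pos n).ne'
          have := Real.log_le_log (by linarith : (0:ℝ) < 1 - t) (by linarith : 1 - t ≤ 1 - t ^ (2^n))
          have hpi := Real.pi_pos
          nlinarith
  have hlim : Filter.Tendsto (fun n : ℕ => C / 2^n) Filter.atTop (nhds 0) := by
    have h2 : Filter.Tendsto (fun n : ℕ => ((1:ℝ)/2)^n) Filter.atTop (nhds 0) :=
      tendsto_pow_atTop_nhds_zero_of_lt_one (by norm_num) (by norm_num)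
    have := h2.const_mul C
    simp only [mul_zero] at this
    convert this using 2 with n
    rw [div_pow, one_pow, div_eq_mul_inv, mul_comm C, inv_eq_one_div, div_eq_mul_inv, one_mul]
    ring
  have : |circF (t:ℂ)| ≤ 0 := ge_of_tendsto' hlim hbd
  exact abs_nonpos_iff.mp this


lemma abs_add_exp_pos {ζ s : ℂ} (hζ : ζ ≠ 0) (hne : Complex.abs s ≠ Complex.abs ζ) (θ : ℝ) :
    0 < Complex.abs (ζ + s * Complex.exp (θ * Complex.I)) := by
  have he : Complex.abs (s * Complex.exp (θ * Complex.I)) = Complex.abs s := by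
    rw [map_mul, Complex.abs_exp_ofReal_mul_I, mul_one]
  rcases lt_or_gt_of_ne hne with h | h
  · have := norm_sub_norm_le ζ (-(s * Complex.exp (θ * Complex.I)))
    simp only [Complex.norm_eq_abs, map_neg_eq_map, sub_neg_eq_add, he] at this
    have hζ' : 0 < Complex.abs ζ := by simpa [Complex.abs.pos_iff] using hζ
    linarith
  · have := norm_sub_norm_le (s * Complex.exp (θ * Complex.I)) (-ζ)
    simp only [Complex.norm_eq_abs, map_neg_eq_map, sub_neg_eq_add, he] at this
    rw [add_comm] at this
    have hζ' : 0 ≤ Complex.abs ζ := Complex.abs.nonneg ζ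
    linarith

lemma cont_logabs_add {ζ s : ℂ} (hζ : ζ ≠ 0) (hne : Complex.abs s ≠ Complex.abs ζ) :
    Continuous fun θ : ℝ => Real.log (Complex.abs (ζ + s * Complex.exp (θ * Complex.I))) := by
  apply Continuous.log
  · exact Complex.continuous_abs.comp <| by continuity
  · exact fun θ => ne_of_gt (abs_add_exp_pos hζ hne θ)

/-- The fundamental lower bound for the log circle average. -/
lemma integral_logabs_ge {ζ s : ℂ} (hζ : ζ ≠ 0) (hne : Complex.abs s ≠ Complex.abs ζ) :
    2*Real.pi*Real.log (Complex.abs ζ)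
      ≤ ∫ θ in (0:ℝ)..(2*Real.pi), Real.log (Complex.abs (ζ + s * Complex.exp (θ * Complex.I))) := by
  have hζ' : 0 < Complex.abs ζ := by simpa [Complex.abs.pos_iff] using hζ
  rcases lt_or_gt_of_ne hne with h | h
  · -- |s| < |ζ| : exact equality with value 2π log |ζ|
    set q : ℂ := -(s/ζ) with hqdef
    have hq : Complex.abs q < 1 := by
      rw [hqdef, map_neg_eq_map, map_div₀, div_lt_one hζ']
      exact h
    have hfact : ∀ θ : ℝ, Real.log (Complex.abs (ζ + s * Complex.exp (θ * Complex.I)))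
        = Real.log (Complex.abs ζ) + Real.log (Complex.abs (1 - q * Complex.exp (θ * Complex.I))) := by
      intro θ
      have : ζ + s * Complex.exp (θ * Complex.I) = ζ * (1 - q * Complex.exp (θ * Complex.I)) := by
        rw [hqdef]
        field_simp
        ring
      rw [this, map_mul, Real.log_mul (ne_of_gt hζ') (ne_of_gt (abs_one_sub_pos hq θ))]
    rw [intervalIntegral.integral_congr (fun θ _ => hfact θ),
      intervalIntegral.integral_add (intervalIntegrable_const) ((cont_logabs hq).intervalIntegrable _ _)]
    have hF : (∫ θ in (0:ℝ)..(2*Real.pi), Real.log (Complex.abs (1 - q * Complex.exp (θ * Complex.I)))) = 0 := by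
      have := circF_eq_abs q
      rw [circF_zero_of_lt_one (Complex.abs.nonneg q) hq] at this
      exact this
    rw [hF, intervalIntegral.integral_const, add_zero, smul_eq_mul, sub_zero]
  · -- |s| > |ζ|
    have hs' : 0 < Complex.abs s := lt_of_le_of_lt (Complex.abs.nonneg ζ) h
    have hs0 : s ≠ 0 := by simpa [Complex.abs.pos_iff] using hs'
    set q : ℂ := -((starRingEnd ℂ) ζ / (starRingEnd ℂ) s) with hqdef
    have hq : Complex.abs q < 1 := by
      rw [hqdef, map_neg_eq_map, map_div₀, Complex.abs_conj, Complex.abs_conj, div_lt_one hs']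
      exact h
    have hfact : ∀ θ : ℝ, Real.log (Complex.abs (ζ + s * Complex.exp (θ * Complex.I)))
        = Real.log (Complex.abs s) + Real.log (Complex.abs (1 - q * Complex.exp (θ * Complex.I))) := by
      intro θ
      have key : Complex.abs (ζ + s * Complex.exp (θ * Complex.I))
          = Complex.abs s * Complex.abs (1 - q * Complex.exp (θ * Complex.I)) := by
        have h1 : Complex.abs (ζ + s * Complex.exp (θ * Complex.I))
            = Complex.abs ((starRingEnd ℂ) ζ + (starRingEnd ℂ) s * Complex.exp (-θ * Complex.I)) := by
          rw [← Complex.abs_conj (ζ + s * Complex.exp (θ * Complex.I))]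
          congr 1
          rw [map_add, map_mul, ← Complex.exp_conj]
          congr 2
          simp [Complex.conj_ofReal]
        have hee : Complex.exp (-θ * Complex.I) * Complex.exp (θ * Complex.I) = 1 := by
          rw [← Complex.exp_add, ← Complex.exp_zero]
          congr 1
          ring
        have hcs : (starRingEnd ℂ) s ≠ 0 := by simpa using hs0
        have hsq : (starRingEnd ℂ) s * q = -((starRingEnd ℂ) ζ) := by
          rw [hqdef]
          field_simp
        have h2 : (starRingEnd ℂ) ζ + (starRingEnd ℂ) s * Complex.exp (-θ * Complex.I)
            = Complex.exp (-θ * Complex.I) * ((starRingEnd ℂ) s * (1 - q * Complex.exp (θ * Complex.I))) := by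
          calc (starRingEnd ℂ) ζ + (starRingEnd ℂ) s * Complex.exp (-θ * Complex.I)
              = (starRingEnd ℂ) ζ * (Complex.exp (-θ * Complex.I) * Complex.exp (θ * Complex.I))
                + (starRingEnd ℂ) s * Complex.exp (-θ * Complex.I) := by rw [hee]; ring
            _ = Complex.exp (-θ * Complex.I) * ((starRingEnd ℂ) s * 1
                - ((starRingEnd ℂ) s * q) * Complex.exp (θ * Complex.I)) := by rw [hsq]; ring
            _ = Complex.exp (-θ * Complex.I) * ((starRingEnd ℂ) s * (1 - q * Complex.exp (θ * Complex.I))) := by ring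
        rw [h1, h2, map_mul, map_mul]
        have : Complex.abs (Complex.exp (-θ * Complex.I)) = 1 := by
          have : (-θ : ℂ) * Complex.I = ((-θ : ℝ) : ℂ) * Complex.I := by push_cast; ring
          rw [this, Complex.abs_exp_ofReal_mul_I]
        rw [this, one_mul, Complex.abs_conj]
      rw [key, Real.log_mul (ne_of_gt hs') ?_]
      have := abs_one_sub_pos hq θ
      exact ne_of_gt this
    rw [intervalIntegral.integral_congr (fun θ _ => hfact θ),
      intervalIntegral.integral_add (intervalIntegrable_const) ((cont_logabs hq).intervalIntegrable _ _)]
    have hF : (∫ θ in (0:ℝ)..(2*Real.pi), Real.log (Complex.abs (1 - q * Complex.exp (θ * Complex.I)))) = 0 := by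
      have := circF_eq_abs q
      rw [circF_zero_of_lt_one (Complex.abs.nonneg q) hq] at this
      exact this
    rw [hF, intervalIntegral.integral_const, add_zero, smul_eq_mul, sub_zero]
    have hlog : Real.log (Complex.abs ζ) ≤ Real.log (Complex.abs s) := Real.log_le_log hζ' h.le
    have hpi := Real.pi_pos
    nlinarith


/-! ### The sequence of poles and the potential -/

open scoped Classical in
/-- A dense sequence of poles in the unit disc, all nonzero. -/
def aSeq : ℕ → ℂ := fun j =>
  if (TopologicalSpace.denseSeq ℂ j) ∈ Metric.ball (0:ℂ) 1 \ {0}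
  then TopologicalSpace.denseSeq ℂ j else 1/2

lemma aSeq_mem (j : ℕ) : aSeq j ∈ Metric.ball (0:ℂ) 1 \ {0} := by
  classical
  unfold aSeq
  split_ifs with h
  · exact h
  · constructor
    · rw [Metric.mem_ball, Complex.dist_eq]
      norm_num
    · norm_num

lemma aSeq_ne (j : ℕ) : aSeq j ≠ 0 := (aSeq_mem j).2

lemma aSeq_lt (j : ℕ) : Complex.abs (aSeq j) < 1 := by
  have := (aSeq_mem j).1
  rwa [Metric.mem_ball, Complex.dist_eq, sub_zero] at this

lemma aSeq_pos (j : ℕ) : 0 < Complex.abs (aSeq j) := by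
  simpa [Complex.abs.pos_iff] using aSeq_ne j

lemma aSeq_dense (w : ℂ) (hw : Complex.abs w < 1) {ε : ℝ} (hε : 0 < ε) :
    ∃ j, Complex.abs (aSeq j - w) < ε := by
  set δ := min ε (1 - Complex.abs w) with hδdef
  have hδ : 0 < δ := lt_min hε (by linarith)
  have hδ1 : δ ≤ ε := min_le_left _ _
  have hδ2 : δ ≤ 1 - Complex.abs w := min_le_right _ _
  -- a nonzero point of the disc near w
  have hp : ∃ p : ℂ, p ∈ Metric.ball w ε ∩ (Metric.ball (0:ℂ) 1 \ {0}) := by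
    have hgen : ∀ τ : ℝ, 0 < τ → τ ≤ δ/2 → w + (τ:ℂ) ∈ Metric.ball w ε ∩ Metric.ball (0:ℂ) 1 := by
      intro τ hτ hτ2
      constructor
      · rw [Metric.mem_ball, Complex.dist_eq]
        simp only [add_sub_cancel_left]
        rw [Complex.norm_eq_abs, Complex.abs_ofReal, _root_.abs_of_nonneg hτ.le]
        linarith
      · rw [Metric.mem_ball, Complex.dist_eq, sub_zero]
        calc Complex.abs (w + (τ:ℂ)) ≤ Complex.abs w + Complex.abs ((τ:ℝ):ℂ) := Complex.abs.add_le _ _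
          _ = Complex.abs w + τ := by rw [Complex.abs_ofReal, _root_.abs_of_nonneg hτ.le]
          _ < 1 := by linarith
    rcases eq_or_ne (w + ((δ/2 : ℝ):ℂ)) 0 with h0 | h0
    · refine ⟨w + ((δ/4 : ℝ):ℂ), (hgen (δ/4) (by linarith) (by linarith)).1,
        (hgen (δ/4) (by linarith) (by linarith)).2, ?_⟩
      intro hmem
      simp only [Set.mem_singleton_iff] at hmem
      apply hδ.ne'
      have h4 : w + ((δ/2 : ℝ):ℂ) = (w + ((δ/4:ℝ):ℂ)) + ((δ/4 : ℝ):ℂ) := by push_cast; ring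
      rw [h4, hmem, zero_add] at h0
      have := congrArg Complex.abs h0
      rw [Complex.abs_ofReal, _root_.abs_of_nonneg (by linarith), map_zero] at this
      linarith
    · exact ⟨w + ((δ/2 : ℝ):ℂ), (hgen (δ/2) (by linarith) (by linarith)).1,
        (hgen (δ/2) (by linarith) (by linarith)).2, h0⟩
  obtain ⟨j, hj⟩ := (TopologicalSpace.denseRange_denseSeq ℂ).exists_mem_open
    (IsOpen.inter Metric.isOpen_ball (IsOpen.sdiff Metric.isOpen_ball isClosed_singleton)) hp
  refine ⟨j, ?_⟩
  have ha : aSeq j = TopologicalSpace.denseSeq ℂ j := by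
    classical
    unfold aSeq
    rw [if_pos hj.2]
  rw [ha]
  have := hj.1
  rwa [Metric.mem_ball, Complex.dist_eq] at this

/-- The coefficients. -/
def cSeq : ℕ → ℝ := fun j => (1/2)^j / (1 + (Real.log 4 - Real.log (Complex.abs (aSeq j))))

lemma X_pos (j : ℕ) : 0 < Real.log 4 - Real.log (Complex.abs (aSeq j)) := by
  have h1 : Real.log (Complex.abs (aSeq j)) ≤ 0 := Real.log_nonpos (Complex.abs.nonneg _) (aSeq_lt j).le
  have h2 : 0 < Real.log 4 := Real.log_pos (by norm_num)
  linarith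

lemma cSeq_pos (j : ℕ) : 0 < cSeq j := by
  have := X_pos j
  unfold cSeq
  positivity

lemma cSeq_mul_le (j : ℕ) : cSeq j * (Real.log 4 - Real.log (Complex.abs (aSeq j))) ≤ (1/2)^j := by
  have hX := X_pos j
  unfold cSeq
  rw [div_mul_eq_mul_div, div_le_iff₀ (by linarith)]
  have h2 : (0:ℝ) < (1/2:ℝ)^j := by positivity
  nlinarith

/-- A single logarithmic pole, as an `ℝ≥0∞`-valued function. -/
def mj (j : ℕ) : ℂ → ENNReal := fun w =>
  if w = aSeq j then ⊤
  else ENNReal.ofReal (cSeq j * (Real.log 4 - Real.log (Complex.abs (w - aSeq j))))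

lemma mj_measurable (j : ℕ) : Measurable (mj j) := by
  unfold mj
  apply Measurable.ite (MeasurableSet.singleton (aSeq j)) measurable_const
  apply ENNReal.measurable_ofReal.comp
  apply Measurable.const_mul
  apply Measurable.const_sub
  exact (Real.measurable_log.comp (Complex.continuous_abs.measurable.comp (measurable_id.sub_const _)))

lemma mj_continuousAt {j : ℕ} {w : ℂ} (hw : w ≠ aSeq j) : ContinuousAt (mj j) w := by
  have hopen : IsOpen {x : ℂ | x ≠ aSeq j} := isOpen_ne
  have hmem : {x : ℂ | x ≠ aSeq j} ∈ nhds w := hopen.mem_nhds hw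
  apply ContinuousAt.congr (f := fun x =>
    ENNReal.ofReal (cSeq j * (Real.log 4 - Real.log (Complex.abs (x - aSeq j)))))
  · apply ENNReal.continuous_ofReal.continuousAt.comp
    apply ContinuousAt.mul continuousAt_const
    apply ContinuousAt.sub continuousAt_const
    apply ContinuousAt.log
    · exact (Complex.continuous_abs.comp (continuous_id.sub continuous_const)).continuousAt
    · simpa [sub_eq_zero] using hw
  · filter_upwards [hmem] with x hx
    unfold mj
    rw [if_neg hx]

lemma mj_lsc (j : ℕ) : LowerSemicontinuous (mj j) := by
  intro w
  rcases eq_or_ne w (aSeq j) with rfl | hw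
  · -- at the pole, values tend to ⊤
    intro y hy
    have hyt : y ≠ ⊤ := by
      unfold mj at hy
      rw [if_pos rfl] at hy
      exact hy.ne
    set K : ℝ := (y.toReal + 1) / cSeq j with hK
    have hc := cSeq_pos j
    have hball : Metric.ball (aSeq j) (min (4 * Real.exp (-K)) 1) ∈ nhds (aSeq j) :=
      Metric.ball_mem_nhds _ (lt_min (by positivity) one_pos)
    filter_upwards [hball] with x hx
    rcases eq_or_ne x (aSeq j) with rfl | hxne
    · unfold mj
      rw [if_pos rfl]
      exact Ne.lt_top hyt
    · unfold mj
      rw [if_neg hxne]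
      rw [Metric.mem_ball, Complex.dist_eq] at hx
      have hpos : 0 < Complex.abs (x - aSeq j) := by
        simpa [sub_eq_zero, Complex.abs.pos_iff] using hxne
      have hlt : Complex.abs (x - aSeq j) < 4 * Real.exp (-K) :=
        lt_of_lt_of_le hx (min_le_left _ _)
      have hlog : Real.log (Complex.abs (x - aSeq j)) < Real.log 4 + (-K) := by
        calc Real.log (Complex.abs (x - aSeq j)) < Real.log (4 * Real.exp (-K)) :=
              Real.log_lt_log hpos hlt
          _ = Real.log 4 + (-K) := by rw [Real.log_mul (by norm_num) (Real.exp_ne_zero _), Real.log_exp]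
      have h2 : y.toReal + 1 ≤ cSeq j * (Real.log 4 - Real.log (Complex.abs (x - aSeq j))) := by
        have h3 : K ≤ Real.log 4 - Real.log (Complex.abs (x - aSeq j)) := by linarith
        calc y.toReal + 1 = cSeq j * K := by rw [hK]; field_simp
          _ ≤ cSeq j * (Real.log 4 - Real.log (Complex.abs (x - aSeq j))) := by
              apply mul_le_mul_of_nonneg_left h3 hc.le
      rw [gt_iff_lt, ENNReal.lt_ofReal_iff_toReal_lt hyt]
      linarith
  · exact (mj_continuousAt hw).lowerSemicontinuousAt

/-- The potential: a subharmonic-type weight with dense poles. -/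
def mfun : ℂ → ENNReal := fun w => ∑' j, mj j w

lemma mfun_measurable : Measurable mfun := Measurable.ennreal_tsum (fun j => mj_measurable j)

lemma mfun_lsc : LowerSemicontinuous mfun := by
  have : mfun = fun w => ⨆ s : Finset ℕ, ∑ j ∈ s, mj j w := by
    funext w
    exact ENNReal.tsum_eq_iSup_sum
  rw [this]
  apply lowerSemicontinuous_iSup
  intro s
  exact lowerSemicontinuous_sum (fun j _ => mj_lsc j)

lemma mfun_pole (j : ℕ) : mfun (aSeq j) = ⊤ := by
  have h1 : mj j (aSeq j) = ⊤ := by unfold mj; rw [if_pos rfl]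
  have := ENNReal.le_tsum (f := fun i => mj i (aSeq j)) j
  rw [h1] at this
  exact top_le_iff.mp this

lemma mfun_zero_ne_top : mfun 0 ≠ ⊤ := by
  have hle : mfun 0 ≤ ∑' j : ℕ, (2⁻¹ : ENNReal)^j := by
    apply ENNReal.tsum_le_tsum
    intro j
    unfold mj
    rw [if_neg (Ne.symm (aSeq_ne j))]
    have h1 : Complex.abs ((0:ℂ) - aSeq j) = Complex.abs (aSeq j) := by
      rw [zero_sub, map_neg_eq_map]
    rw [h1]
    calc ENNReal.ofReal (cSeq j * (Real.log 4 - Real.log (Complex.abs (aSeq j))))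
        ≤ ENNReal.ofReal ((1/2)^j) := ENNReal.ofReal_le_ofReal (cSeq_mul_le j)
      _ = (2⁻¹ : ENNReal)^j := by
          rw [ENNReal.ofReal_pow (by norm_num : (0:ℝ) ≤ 1/2)]
          congr 1
          rw [one_div, ENNReal.ofReal_inv_of_pos (by norm_num : (0:ℝ) < 2)]
          norm_num
  apply ne_top_of_le_ne_top ?_ hle
  rw [ENNReal.tsum_geometric, ENNReal.one_sub_inv_two]
  simp


/-! ### The core circle sub-mean inequality for a single pole -/

lemma core_ne {j : ℕ} {ζ s : ℂ} (hζ : ζ ≠ 0) (hne : Complex.abs s ≠ Complex.abs ζ)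
    (hζ4 : Complex.abs ζ < 4)
    (hcirc : ∀ θ : ℝ, Complex.abs (ζ + s * Complex.exp (θ * Complex.I)) < 4) :
    ∫⁻ θ in Set.Ioc (0:ℝ) (2*Real.pi), mj j (aSeq j + ζ + s * Complex.exp (θ * Complex.I))
      ≤ ENNReal.ofReal (2*Real.pi) * mj j (aSeq j + ζ) := by
  have hζ' : 0 < Complex.abs ζ := by simpa [Complex.abs.pos_iff] using hζ
  have hpos := abs_add_exp_pos hζ hne
  have hrw : ∀ θ : ℝ, mj j (aSeq j + ζ + s * Complex.exp (θ * Complex.I))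
      = ENNReal.ofReal (cSeq j * (Real.log 4 - Real.log (Complex.abs (ζ + s * Complex.exp (θ * Complex.I))))) := by
    intro θ
    have hne' : aSeq j + ζ + s * Complex.exp (θ * Complex.I) ≠ aSeq j := by
      intro h
      apply (hpos θ).ne'
      have : ζ + s * Complex.exp (θ * Complex.I) = 0 := by linear_combination h
      rw [this, map_zero]
    unfold mj
    rw [if_neg hne']
    congr 3
    ring_nf
  have hg : ∀ θ : ℝ, 0 ≤ cSeq j * (Real.log 4 - Real.log (Complex.abs (ζ + s * Complex.exp (θ * Complex.I)))) := by
    intro θ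
    have hlog : Real.log (Complex.abs (ζ + s * Complex.exp (θ * Complex.I))) ≤ Real.log 4 := by
      rcases lt_or_ge (Complex.abs (ζ + s * Complex.exp (θ * Complex.I))) 4 with h | h
      · exact (Real.log_lt_log (hpos θ) h).le
      · exact absurd (hcirc θ) (not_lt.mpr h)
    have := (cSeq_pos j).le
    nlinarith
  have hInt : IntegrableOn (fun θ : ℝ =>
      cSeq j * (Real.log 4 - Real.log (Complex.abs (ζ + s * Complex.exp (θ * Complex.I)))))
      (Set.Ioc (0:ℝ) (2*Real.pi)) volume := by
    rw [← intervalIntegrable_iff_integrableOn_Ioc_of_le (by positivity)]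
    exact (continuous_const.mul (continuous_const.sub (cont_logabs_add hζ hne))).intervalIntegrable _ _
  calc ∫⁻ θ in Set.Ioc (0:ℝ) (2*Real.pi), mj j (aSeq j + ζ + s * Complex.exp (θ * Complex.I))
      = ∫⁻ θ in Set.Ioc (0:ℝ) (2*Real.pi), ENNReal.ofReal
          (cSeq j * (Real.log 4 - Real.log (Complex.abs (ζ + s * Complex.exp (θ * Complex.I))))) := by
        exact lintegral_congr (fun θ => hrw θ)
    _ = ENNReal.ofReal (∫ θ in Set.Ioc (0:ℝ) (2*Real.pi),
          cSeq j * (Real.log 4 - Real.log (Complex.abs (ζ + s * Complex.exp (θ * Complex.I))))) := by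
        rw [MeasureTheory.ofReal_integral_eq_lintegral_ofReal hInt
          (Filter.Eventually.of_forall (fun θ => hg θ))]
    _ ≤ ENNReal.ofReal (2*Real.pi * (cSeq j * (Real.log 4 - Real.log (Complex.abs ζ)))) := by
        apply ENNReal.ofReal_le_ofReal
        have heq : (∫ θ in Set.Ioc (0:ℝ) (2*Real.pi),
            cSeq j * (Real.log 4 - Real.log (Complex.abs (ζ + s * Complex.exp (θ * Complex.I)))))
            = ∫ θ in (0:ℝ)..(2*Real.pi),
              cSeq j * (Real.log 4 - Real.log (Complex.abs (ζ + s * Complex.exp (θ * Complex.I)))) := by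
          rw [intervalIntegral.integral_of_le (by positivity)]
        rw [heq, intervalIntegral.integral_const_mul,
          intervalIntegral.integral_sub (intervalIntegrable_const)
            ((cont_logabs_add hζ hne).intervalIntegrable _ _),
          intervalIntegral.integral_const, smul_eq_mul, sub_zero]
        have hlb := integral_logabs_ge hζ hne
        have hc := (cSeq_pos j).le
        nlinarith
    _ = ENNReal.ofReal (2*Real.pi) * mj j (aSeq j + ζ) := by
        rw [ENNReal.ofReal_mul (by positivity)]
        congr 1
        unfold mj
        rw [if_neg (by
          intro h
          exact hζ (by linear_combination h))]
        congr 3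
        ring_nf

lemma core (j : ℕ) (z₀ β : ℂ) (r : ℝ)
    (hz2 : Complex.abs (z₀ - aSeq j) < 2)
    (hcirc : ∀ θ : ℝ, Complex.abs (z₀ + circleMap 0 r θ * β - aSeq j) < 2) :
    ∫⁻ θ in Set.Ioc (0:ℝ) (2*Real.pi), mj j (z₀ + circleMap 0 r θ * β)
      ≤ ENNReal.ofReal (2*Real.pi) * mj j z₀ := by
  rcases eq_or_ne z₀ (aSeq j) with rfl | hz
  · have : mj j (aSeq j) = ⊤ := by unfold mj; rw [if_pos rfl]
    rw [this, ENNReal.mul_top (by positivity : ENNReal.ofReal (2*Real.pi) ≠ 0)]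
    exact le_top
  set ζ : ℂ := z₀ - aSeq j with hζdef
  have hζ : ζ ≠ 0 := sub_ne_zero.mpr hz
  have hζ' : 0 < Complex.abs ζ := by simpa [Complex.abs.pos_iff] using hζ
  set s : ℂ := (r:ℂ) * β with hsdef
  have hpt : ∀ θ : ℝ, z₀ + circleMap 0 r θ * β = aSeq j + ζ + s * Complex.exp (θ * Complex.I) := by
    intro θ
    simp only [circleMap, zero_add, hsdef, hζdef]
    ring
  have hpt2 : ∀ θ : ℝ, z₀ + circleMap 0 r θ * β - aSeq j = ζ + s * Complex.exp (θ * Complex.I) := by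
    intro θ
    rw [hpt θ]
    ring
  have hz0 : z₀ = aSeq j + ζ := by rw [hζdef]; ring
  have hcirc' : ∀ θ : ℝ, Complex.abs (ζ + s * Complex.exp (θ * Complex.I)) < 2 := by
    intro θ
    rw [← hpt2 θ]
    exact hcirc θ
  rcases eq_or_ne (Complex.abs s) (Complex.abs ζ) with habs | habs
  · -- singular case: Fatou approximation from outside
    have hs' : 0 < Complex.abs s := by rw [habs]; exact hζ'
    have hs0 : s ≠ 0 := by simpa [Complex.abs.pos_iff] using hs'
    set t : ℕ → ℝ := fun n => 1 + (1/(n+1 : ℝ)) * (1/(Complex.abs s + 1)) with htdef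
    have ht1 : ∀ n, 1 < t n := by
      intro n
      have h1 : (0:ℝ) < 1/(n+1 : ℝ) := by positivity
      have h2 : (0:ℝ) < 1/(Complex.abs s + 1) := by positivity
      simp only [htdef]
      nlinarith
    have hslack : ∀ n, (t n - 1) * Complex.abs s < 1 := by
      intro n
      simp only [htdef, add_sub_cancel_left]
      have h1 : 1/(n+1 : ℝ) ≤ 1 := by
        rw [div_le_one (by positivity)]
        simp [Nat.cast_nonneg]
      have h2 : Complex.abs s / (Complex.abs s + 1) < 1 := by
        rw [div_lt_one (by positivity)]
        linarith
      calc 1/(n+1 : ℝ) * (1/(Complex.abs s + 1)) * Complex.abs s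
          = (1/(n+1 : ℝ)) * (Complex.abs s / (Complex.abs s + 1)) := by ring
        _ ≤ 1 * (Complex.abs s / (Complex.abs s + 1)) := by
            apply mul_le_mul_of_nonneg_right h1 (by positivity)
        _ < 1 := by rw [one_mul]; exact h2
    set sn : ℕ → ℂ := fun n => ((t n : ℝ) : ℂ) * s with hsndef
    have habs_sn : ∀ n, Complex.abs (sn n) = t n * Complex.abs s := by
      intro n
      rw [hsndef]
      simp only [map_mul, Complex.abs_ofReal]
      rw [_root_.abs_of_pos (lt_trans one_pos (ht1 n))]
    have hf_meas : ∀ n : ℕ, Measurable (fun θ : ℝ =>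
        mj j (aSeq j + ζ + sn n * Complex.exp (θ * Complex.I))) := by
      intro n
      apply (mj_measurable j).comp
      apply Continuous.measurable
      exact continuous_const.add (continuous_const.mul
        (Complex.continuous_exp.comp (Complex.continuous_ofReal.mul continuous_const)))
    have hbound : ∀ n : ℕ, ∫⁻ θ in Set.Ioc (0:ℝ) (2*Real.pi),
        mj j (aSeq j + ζ + sn n * Complex.exp (θ * Complex.I))
        ≤ ENNReal.ofReal (2*Real.pi) * mj j (aSeq j + ζ) := by
      intro n
      apply core_ne hζ
      · rw [habs_sn n]
        apply ne_of_gt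
        rw [← habs]
        nlinarith [ht1 n, hs']
      · linarith [hcirc' 0, Complex.abs.nonneg (s * Complex.exp ((0:ℝ) * Complex.I))]
      · intro θ
        have h1 : Complex.abs (ζ + sn n * Complex.exp (θ * Complex.I))
            ≤ Complex.abs (ζ + s * Complex.exp (θ * Complex.I))
              + (t n - 1) * Complex.abs s := by
          have hdec : ζ + sn n * Complex.exp (θ * Complex.I)
              = (ζ + s * Complex.exp (θ * Complex.I)) + (((t n - 1 : ℝ) : ℂ) * s) * Complex.exp (θ * Complex.I) := by
            rw [hsndef]
            push_cast
            ring
          rw [hdec]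
          calc Complex.abs ((ζ + s * Complex.exp (θ * Complex.I)) + (((t n - 1 : ℝ) : ℂ) * s) * Complex.exp (θ * Complex.I))
              ≤ Complex.abs (ζ + s * Complex.exp (θ * Complex.I))
                + Complex.abs ((((t n - 1 : ℝ) : ℂ) * s) * Complex.exp (θ * Complex.I)) := Complex.abs.add_le _ _
            _ = Complex.abs (ζ + s * Complex.exp (θ * Complex.I)) + (t n - 1) * Complex.abs s := by
                rw [map_mul, map_mul, Complex.abs_exp_ofReal_mul_I, mul_one, Complex.abs_ofReal,
                  _root_.abs_of_pos (by linarith [ht1 n])]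
        linarith [hcirc' θ, hslack n]
    -- the exceptional set
    set N : Set ℝ := {θ : ℝ | ζ + s * Complex.exp (θ * Complex.I) = 0} with hNdef
    have hN : volume N = 0 := by
      rcases Set.eq_empty_or_nonempty N with h | ⟨θ₀, hθ₀⟩
      · rw [h]; exact measure_empty
      · apply Set.Countable.measure_zero
        apply Set.Countable.mono ?_ (Set.countable_range (fun k : ℤ => θ₀ + k * (2*Real.pi)))
        intro θ hθ
        have h1 : s * Complex.exp (θ * Complex.I) = s * Complex.exp (θ₀ * Complex.I) := by
          have e1 : ζ + s * Complex.exp (θ * Complex.I) = 0 := hθ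
          have e2 : ζ + s * Complex.exp (θ₀ * Complex.I) = 0 := hθ₀
          linear_combination e1 - e2
        have h2 : Complex.exp (θ * Complex.I) = Complex.exp (θ₀ * Complex.I) :=
          mul_left_cancel₀ hs0 h1
        obtain ⟨k, hk⟩ := Complex.exp_eq_exp_iff_exists_int.mp h2
        refine ⟨k, ?_⟩
        have h3 : (θ : ℂ) = (θ₀ : ℂ) + (k : ℂ) * (2*Real.pi) := by
          have h4 : ((θ : ℂ) - ((θ₀ : ℂ) + (k:ℂ)*(2*Real.pi))) * Complex.I = 0 := by
            linear_combination hk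
          rcases mul_eq_zero.mp h4 with h5 | h5
          · linear_combination h5
          · exact absurd h5 Complex.I_ne_zero
        have h6 : θ = θ₀ + (k:ℝ) * (2*Real.pi) := by exact_mod_cast h3
        exact h6.symm
    have hae : ∀ᵐ θ ∂(volume.restrict (Set.Ioc (0:ℝ) (2*Real.pi))), θ ∉ N :=
      ae_restrict_of_ae (measure_eq_zero_iff_ae_notMem.mp hN)
    have htlim : Filter.Tendsto t Filter.atTop (nhds 1) := by
      rw [htdef]
      have h1 : Filter.Tendsto (fun n : ℕ => 1/(n+1 : ℝ)) Filter.atTop (nhds 0) :=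
        tendsto_one_div_add_atTop_nhds_zero_nat
      have h2 := h1.mul_const (1/(Complex.abs s + 1))
      rw [zero_mul] at h2
      have h3 := h2.const_add (1 : ℝ)
      rw [add_zero] at h3
      exact h3
    have hptwise : ∀ θ : ℝ, θ ∉ N →
        Filter.Tendsto (fun n : ℕ => mj j (aSeq j + ζ + sn n * Complex.exp (θ * Complex.I)))
          Filter.atTop (nhds (mj j (aSeq j + ζ + s * Complex.exp (θ * Complex.I)))) := by
      intro θ hθ
      have hwne : aSeq j + ζ + s * Complex.exp (θ * Complex.I) ≠ aSeq j := by
        intro h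
        apply hθ
        rw [hNdef, Set.mem_setOf_eq]
        linear_combination h
      have hsn_lim : Filter.Tendsto (fun n : ℕ => aSeq j + ζ + sn n * Complex.exp (θ * Complex.I))
          Filter.atTop (nhds (aSeq j + ζ + s * Complex.exp (θ * Complex.I))) := by
        apply Filter.Tendsto.const_add
        have h1 : Filter.Tendsto (fun n : ℕ => ((t n : ℝ) : ℂ)) Filter.atTop (nhds 1) := by
          have := (Complex.continuous_ofReal.tendsto 1).comp htlim
          simpa [Function.comp_def] using this
        have h2 := (h1.mul_const s).mul_const (Complex.exp (θ * Complex.I))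
        rw [one_mul] at h2
        have h3 : (fun n : ℕ => sn n * Complex.exp (θ * Complex.I))
            = fun n : ℕ => ((t n : ℝ):ℂ) * s * Complex.exp (θ * Complex.I) := by
          funext n
          rw [hsndef]
        rw [h3]
        exact h2
      exact ((mj_continuousAt hwne).tendsto).comp hsn_lim
    calc ∫⁻ θ in Set.Ioc (0:ℝ) (2*Real.pi), mj j (z₀ + circleMap 0 r θ * β)
        = ∫⁻ θ in Set.Ioc (0:ℝ) (2*Real.pi),
            Filter.liminf (fun n : ℕ => mj j (aSeq j + ζ + sn n * Complex.exp (θ * Complex.I))) Filter.atTop := by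
          apply lintegral_congr_ae
          filter_upwards [hae] with θ hθ
          rw [hpt θ, ((hptwise θ hθ).liminf_eq).symm]
      _ ≤ Filter.liminf (fun n : ℕ => ∫⁻ θ in Set.Ioc (0:ℝ) (2*Real.pi),
            mj j (aSeq j + ζ + sn n * Complex.exp (θ * Complex.I))) Filter.atTop :=
          lintegral_liminf_le hf_meas
      _ ≤ ENNReal.ofReal (2*Real.pi) * mj j (aSeq j + ζ) := by
          apply Filter.liminf_le_of_frequently_le'
          apply Filter.Eventually.frequently
          exact Filter.Eventually.of_forall hbound
      _ = ENNReal.ofReal (2*Real.pi) * mj j z₀ := by rw [← hz0]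
  · -- regular case
    have h1 : ∀ θ : ℝ, mj j (z₀ + circleMap 0 r θ * β) = mj j (aSeq j + ζ + s * Complex.exp (θ * Complex.I)) := by
      intro θ
      rw [hpt θ]
    calc ∫⁻ θ in Set.Ioc (0:ℝ) (2*Real.pi), mj j (z₀ + circleMap 0 r θ * β)
        = ∫⁻ θ in Set.Ioc (0:ℝ) (2*Real.pi), mj j (aSeq j + ζ + s * Complex.exp (θ * Complex.I)) :=
          lintegral_congr (fun θ => h1 θ)
      _ ≤ ENNReal.ofReal (2*Real.pi) * mj j (aSeq j + ζ) :=
          core_ne hζ habs (by linarith) (fun θ => by linarith [hcirc' θ])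
      _ = ENNReal.ofReal (2*Real.pi) * mj j z₀ := by rw [← hz0]


/-! ### The `ℂⁿ` level -/

/-- The full potential on `ℂⁿ`. -/
def MM (n : ℕ) : (Fin n → ℂ) → ENNReal := fun z => ∑ k : Fin n, mfun (z k)

lemma MM_lsc (n : ℕ) : LowerSemicontinuous (MM n) :=
  lowerSemicontinuous_sum (fun k _ => mfun_lsc.comp (continuous_apply k))

lemma MM_zero_ne_top (n : ℕ) : MM n 0 ≠ ⊤ := by
  unfold MM
  rw [← lt_top_iff_ne_top]
  apply ENNReal.sum_lt_top.mpr
  intro k _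
  simp only [Pi.zero_apply]
  exact mfun_zero_ne_top.lt_top

/-- The plurisubharmonic witness. -/
def uPSH (n : ℕ) : (Fin n → ℂ) → EReal := fun z => -((MM n z : EReal))

lemma uPSH_usc (n : ℕ) : UpperSemicontinuous (uPSH n) := by
  have h : uPSH n = (fun x : ENNReal => -((x : EReal))) ∘ (MM n) := rfl
  rw [h]
  apply Continuous.comp_lowerSemicontinuous_antitone
    (continuous_coe_ennreal_ereal.neg) (MM_lsc n)
  intro x y hxy
  show -((y : EReal)) ≤ -((x : EReal))
  rw [EReal.neg_le_neg_iff]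
  exact EReal.coe_ennreal_le_coe_ennreal_iff.mpr hxy

lemma posPart_nonpos {x : EReal} (hx : x ≤ 0) : EReal.posPart x = 0 := by
  unfold EReal.posPart
  rw [if_neg (by rintro rfl; simp at hx)]
  rw [ENNReal.ofReal_eq_zero]
  induction x using EReal.rec with
  | bot => simp
  | coe a => rw [EReal.toReal_coe]; exact_mod_cast hx
  | top => simp at hx

lemma posPart_coe_ennreal (x : ENNReal) : EReal.posPart ((x : EReal)) = x := by
  rcases eq_or_ne x ⊤ with rfl | hx
  · rw [EReal.coe_ennreal_top]
    unfold EReal.posPart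
    rw [if_pos rfl]
  · unfold EReal.posPart
    rw [if_neg (fun h => hx (EReal.coe_ennreal_eq_top_iff.mp h)), EReal.toReal_coe_ennreal,
      ENNReal.ofReal_toReal hx]

lemma uPSH_nonpos (n : ℕ) (z : Fin n → ℂ) : uPSH n z ≤ 0 := by
  unfold uPSH
  rw [← neg_zero, EReal.neg_le_neg_iff]
  exact EReal.coe_ennreal_le_coe_ennreal_iff.mpr zero_le |>.trans_eq' (by simp)

lemma pshOn_uPSH (n : ℕ) : PSHOn (uPSH n) (polydisc n 1) := by
  constructor
  · exact (uPSH_usc n).upperSemicontinuousOn _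
  · intro z hz b r hr hmem
    -- compute the circle average
    have havg : erealCircleAvg (fun lam => uPSH n (z + lam • b)) 0 r
        = - (((∫⁻ θ in Set.Ioc (0:ℝ) (2*Real.pi), MM n (z + (circleMap 0 r θ) • b) : ENNReal) : EReal)
            / ((2*Real.pi : ℝ) : EReal)) := by
      unfold erealCircleAvg
      have h1 : ∀ θ : ℝ, EReal.posPart ((fun lam => uPSH n (z + lam • b)) (circleMap 0 r θ)) = 0 :=
        fun θ => posPart_nonpos (uPSH_nonpos n _)
      have h2 : ∀ θ : ℝ, EReal.posPart (-((fun lam => uPSH n (z + lam • b)) (circleMap 0 r θ)))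
          = MM n (z + (circleMap 0 r θ) • b) := by
        intro θ
        simp only [uPSH, neg_neg]
        exact posPart_coe_ennreal _
      rw [lintegral_congr h1, lintegral_congr h2]
      rw [lintegral_zero]
      simp only [EReal.coe_ennreal_zero]
      rw [EReal.zero_div, zero_sub]
    rw [havg]
    have hup : uPSH n z = -((MM n z : EReal)) := rfl
    rw [hup, EReal.neg_le_neg_iff]
    have hpi : (0:ℝ) < 2*Real.pi := by positivity
    rw [EReal.div_le_iff_le_mul (by exact_mod_cast EReal.coe_pos.mpr hpi) (EReal.coe_ne_top _)]
    -- the main ENNReal estimate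
    have key : (∫⁻ θ in Set.Ioc (0:ℝ) (2*Real.pi), MM n (z + (circleMap 0 r θ) • b) : ENNReal)
        ≤ ENNReal.ofReal (2*Real.pi) * MM n z := by
      have hMrw : ∀ θ : ℝ, MM n (z + (circleMap 0 r θ) • b)
          = ∑ k : Fin n, mfun (z k + circleMap 0 r θ * b k) := by
        intro θ
        unfold MM
        congr 1
      rw [lintegral_congr hMrw]
      have hmeas : ∀ k : Fin n, Measurable (fun θ : ℝ => mfun (z k + circleMap 0 r θ * b k)) := by
        intro k
        exact mfun_measurable.comp
          ((continuous_const.add ((continuous_circleMap 0 r).mul continuous_const)).measurable)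
      rw [lintegral_finset_sum _ (fun k _ => hmeas k)]
      have hkb : ∀ k : Fin n, (∫⁻ θ in Set.Ioc (0:ℝ) (2*Real.pi), mfun (z k + circleMap 0 r θ * b k))
          ≤ ENNReal.ofReal (2*Real.pi) * mfun (z k) := by
        intro k
        have hmj : ∀ θ : ℝ, mfun (z k + circleMap 0 r θ * b k)
            = ∑' j : ℕ, mj j (z k + circleMap 0 r θ * b k) := fun θ => rfl
        have hjm : ∀ j : ℕ, AEMeasurable (fun θ : ℝ => mj j (z k + circleMap 0 r θ * b k))
            (volume.restrict (Set.Ioc (0:ℝ) (2*Real.pi))) := by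
          intro j
          exact ((mj_measurable j).comp
            ((continuous_const.add ((continuous_circleMap 0 r).mul continuous_const)).measurable)).aemeasurable
        rw [lintegral_congr hmj, lintegral_tsum hjm]
        calc ∑' j : ℕ, ∫⁻ θ in Set.Ioc (0:ℝ) (2*Real.pi), mj j (z k + circleMap 0 r θ * b k)
            ≤ ∑' j : ℕ, ENNReal.ofReal (2*Real.pi) * mj j (z k) := by
              apply ENNReal.tsum_le_tsum
              intro j
              apply core j (z k) (b k) r
              · have hz1 : Complex.abs (z k) < 1 := hz k
                have ha1 : Complex.abs (aSeq j) < 1 := aSeq_lt j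
                calc Complex.abs (z k - aSeq j) ≤ Complex.abs (z k) + Complex.abs (aSeq j) := by
                      simpa [Complex.norm_eq_abs] using norm_sub_le (z k) (aSeq j)
                  _ < 2 := by linarith
              · intro θ
                have hmem' := hmem (circleMap 0 r θ) (by
                  rw [norm_circleMap_zero, _root_.abs_of_pos hr])
                have hz1 : Complex.abs ((z + circleMap 0 r θ • b) k) < 1 := hmem' k
                have hcoord : (z + circleMap 0 r θ • b) k = z k + circleMap 0 r θ * b k := rfl
                rw [hcoord] at hz1
                have ha1 : Complex.abs (aSeq j) < 1 := aSeq_lt j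
                calc Complex.abs (z k + circleMap 0 r θ * b k - aSeq j)
                    ≤ Complex.abs (z k + circleMap 0 r θ * b k) + Complex.abs (aSeq j) := by
                      simpa [Complex.norm_eq_abs] using norm_sub_le (z k + circleMap 0 r θ * b k) (aSeq j)
                  _ < 2 := by linarith
          _ = ENNReal.ofReal (2*Real.pi) * mfun (z k) := ENNReal.tsum_mul_left
      calc ∑ k : Fin n, ∫⁻ θ in Set.Ioc (0:ℝ) (2*Real.pi), mfun (z k + circleMap 0 r θ * b k)
          ≤ ∑ k : Fin n, ENNReal.ofReal (2*Real.pi) * mfun (z k) :=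
            Finset.sum_le_sum (fun k _ => hkb k)
        _ = ENNReal.ofReal (2*Real.pi) * MM n z := by
            unfold MM
            rw [Finset.mul_sum]
    calc ((∫⁻ θ in Set.Ioc (0:ℝ) (2*Real.pi), MM n (z + (circleMap 0 r θ) • b) : ENNReal) : EReal)
        ≤ ((ENNReal.ofReal (2*Real.pi) * MM n z : ENNReal) : EReal) :=
          EReal.coe_ennreal_le_coe_ennreal_iff.mpr key
      _ = ((2*Real.pi : ℝ) : EReal) * ((MM n z : EReal)) := by
          rw [EReal.coe_ennreal_mul]
          congr 1
          rw [EReal.coe_ennreal_ofReal, max_eq_left (by positivity)]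

/-! ### No hypersurface piece in the complement -/

set_option maxHeartbeats 2000000 in
lemma hyper_contra {n : ℕ} (hn : 2 ≤ n) {C : Set (Fin n → ℂ)}
    (hCpoly : C ⊆ polydisc n 1) (hCM : ∀ z ∈ C, MM n z ≠ ⊤)
    {c : Fin n → ℂ} (hc : c ∈ C) {U : Set (Fin n → ℂ)} {ρ : (Fin n → ℂ) → ℝ}
    (hUopen : IsOpen U) (hcU : c ∈ U) (hρ : ContDiff ℝ 1 ρ)
    (hreg : ∀ z ∈ U, fderiv ℝ ρ z ≠ 0) (hCU : C ∩ U = {z ∈ U | ρ z = 0}) : False := by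
  classical
  have hρc : ρ c = 0 := by
    have : c ∈ C ∩ U := ⟨hc, hcU⟩
    rw [hCU] at this
    exact this.2
  obtain ⟨L, hLdef⟩ : ∃ L' : (Fin n → ℂ) →L[ℝ] ℝ, L' = fderiv ℝ ρ c := ⟨_, rfl⟩
  have hL : L ≠ 0 := by rw [hLdef]; exact hreg c hcU
  -- find a coordinate direction on which L is nonzero
  obtain ⟨y, hy⟩ : ∃ y : Fin n → ℂ, L y ≠ 0 := by
    by_contra h
    push_neg at h
    exact hL (ContinuousLinearMap.ext (fun y => by rw [h y]; rfl))
  obtain ⟨j0, hj0⟩ : ∃ j0 : Fin n, L (Pi.single j0 (y j0)) ≠ 0 := by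
    by_contra h
    push_neg at h
    apply hy
    have hdecomp : y = ∑ j : Fin n, Pi.single j (y j) := by
      funext i
      rw [Finset.sum_apply]
      simp [Pi.single_apply]
    rw [hdecomp, map_sum]
    exact Finset.sum_eq_zero (fun j _ => h j)
  -- a coordinate different from j0
  have h1n : 1 < n := hn
  obtain ⟨k, hkj0⟩ : ∃ k : Fin n, k ≠ j0 := by
    rcases eq_or_ne j0 ⟨0, by omega⟩ with h | h
    · refine ⟨⟨1, by omega⟩, ?_⟩
      rw [h]
      intro hcon
      exact absurd (Fin.val_eq_of_eq hcon) (by norm_num)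
    · exact ⟨⟨0, by omega⟩, fun hcon => h hcon.symm⟩
  obtain ⟨w0, hw0k, hLw0⟩ : ∃ w : Fin n → ℂ, w k = 0 ∧ L w = 1 := by
    refine ⟨(L (Pi.single j0 (y j0)))⁻¹ • (Pi.single j0 (y j0) : Fin n → ℂ), ?_, ?_⟩
    · simp only [Pi.smul_apply]
      rw [Pi.single_eq_of_ne hkj0]
      simp
    · rw [ContinuousLinearMap.map_smul, smul_eq_mul, inv_mul_cancel₀ hj0]
  -- continuity of the derivative
  have hfC : Continuous (fderiv ℝ ρ) := hρ.continuous_fderiv one_ne_zero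
  obtain ⟨ε₁, hε₁, hε₁val⟩ : ∃ x : ℝ, 0 < x ∧ x = 1 / (2 * (‖w0‖ + 1)) :=
    ⟨_, by positivity, rfl⟩
  obtain ⟨δ₁, hδ₁pos, hδ₁⟩ := Metric.continuousAt_iff.mp (hfC.continuousAt (x := c)) ε₁ hε₁
  obtain ⟨δ₂, hδ₂pos, hδ₂⟩ := Metric.isOpen_iff.mp hUopen c hcU
  obtain ⟨δ, hδpos, hδ1, hδ2⟩ : ∃ x : ℝ, 0 < x ∧ x ≤ δ₁ ∧ x ≤ δ₂ :=
    ⟨min δ₁ δ₂, lt_min hδ₁pos hδ₂pos, min_le_left _ _, min_le_right _ _⟩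
  have hball : Metric.ball c δ ⊆ U := fun x hx => hδ₂ (lt_of_lt_of_le hx hδ2)
  -- strict derivative lower bound on the ball
  have hderiv : ∀ x ∈ Metric.ball c δ, (1:ℝ)/2 < (fderiv ℝ ρ x) w0 := by
    intro x hx
    have hx1 : dist x c < δ₁ := lt_of_lt_of_le hx hδ1
    have h1 := hδ₁ hx1
    rw [dist_eq_norm, ← hLdef] at h1
    have h2 : ‖(fderiv ℝ ρ x - L) w0‖ ≤ ‖fderiv ℝ ρ x - L‖ * ‖w0‖ :=
      ContinuousLinearMap.le_opNorm _ _
    have h3 : (fderiv ℝ ρ x - L) w0 = (fderiv ℝ ρ x) w0 - 1 := by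
      rw [ContinuousLinearMap.sub_apply, hLw0]
    rw [h3] at h2
    have h4 : ‖fderiv ℝ ρ x - L‖ * ‖w0‖ < ε₁ * ‖w0‖ + ε₁ := by
      nlinarith [norm_nonneg w0, norm_nonneg (fderiv ℝ ρ x - L)]
    have h5 : ε₁ * ‖w0‖ + ε₁ ≤ 1/2 := by
      rw [hε₁val]
      rw [div_mul_eq_mul_div, ← add_div, div_le_div_iff₀ (by positivity) (by norm_num)]
      nlinarith [norm_nonneg w0]
    have h6 : |(fderiv ℝ ρ x) w0 - 1| < 1/2 := by
      rw [← Real.norm_eq_abs]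
      linarith
    rw [abs_lt] at h6
    linarith [h6.1]
  obtain ⟨T, hT, hTval⟩ : ∃ x : ℝ, 0 < x ∧ x = δ / (4 * (‖w0‖ + 1)) :=
    ⟨_, by positivity, rfl⟩
  -- continuity of ρ at c
  obtain ⟨δ₃, hδ₃pos, hδ₃⟩ := Metric.continuousAt_iff.mp (hρ.continuous.continuousAt (x := c)) (T/4) (by positivity)
  -- choose the pole p = aSeq j near c k
  have hck : Complex.abs (c k) < 1 := hCpoly hc k
  obtain ⟨η, hη, hη1, hη2⟩ : ∃ x : ℝ, 0 < x ∧ x ≤ δ/2 ∧ x ≤ δ₃ :=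
    ⟨min (δ/2) δ₃, lt_min (by positivity) hδ₃pos, min_le_left _ _, min_le_right _ _⟩
  obtain ⟨j, hj⟩ := aSeq_dense (c k) hck hη
  set p : ℂ := aSeq j with hpdef
  set c' : Fin n → ℂ := Function.update c k p with hc'def
  have hc'c : ‖c' - c‖ ≤ Complex.abs (p - c k) := by
    apply (pi_norm_le_iff_of_nonneg (Complex.abs.nonneg _)).mpr
    intro i
    rcases eq_or_ne i k with rfl | hik
    · rw [hc'def]
      simp only [Pi.sub_apply, Function.update_self]
      rw [Complex.norm_eq_abs]
    · rw [hc'def]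
      simp only [Pi.sub_apply, Function.update_of_ne hik]
      simp [Complex.abs.nonneg]
  have hpck : Complex.abs (p - c k) < η := hj
  -- all relevant points stay in the ball
  have hmemball : ∀ t : ℝ, |t| ≤ T → c' + t • w0 ∈ Metric.ball c δ := by
    intro t ht
    rw [Metric.mem_ball, dist_eq_norm]
    have h1 : c' + t • w0 - c = (c' - c) + t • w0 := by abel
    rw [h1]
    have h2 : ‖(c' - c) + t • w0‖ ≤ ‖c' - c‖ + ‖t • w0‖ := norm_add_le _ _
    have h3 : ‖t • w0‖ = |t| * ‖w0‖ := by rw [norm_smul, Real.norm_eq_abs]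
    have h4 : |t| * ‖w0‖ ≤ T * ‖w0‖ := mul_le_mul_of_nonneg_right ht (norm_nonneg _)
    have h5 : T * ‖w0‖ ≤ δ/4 := by
      rw [hTval, div_mul_eq_mul_div, div_le_div_iff₀ (by positivity) (by norm_num)]
      nlinarith [norm_nonneg w0, hδpos.le]
    have h6 : ‖c' - c‖ < δ/2 := lt_of_le_of_lt hc'c (lt_of_lt_of_le hpck hη1)
    have hfour : δ/4 < δ/2 := by linarith
    calc ‖(c' - c) + t • w0‖ ≤ ‖c' - c‖ + ‖t • w0‖ := h2
      _ < δ/2 + δ/2 := by rw [h3]; linarith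
      _ = δ := by ring
  -- the restricted function and its derivative
  set g : ℝ → ℝ := fun t => ρ (c' + t • w0) with hgdef
  have hline : ∀ t : ℝ, HasDerivAt (fun u : ℝ => c' + u • w0) w0 t := by
    intro t
    have h1 : HasDerivAt (fun u : ℝ => u • w0) ((1:ℝ) • w0) t := (hasDerivAt_id t).smul_const w0
    simpa using h1.const_add c'
  have hg : ∀ t : ℝ, HasDerivAt g ((fderiv ℝ ρ (c' + t • w0)) w0) t := by
    intro t
    have hd : DifferentiableAt ℝ ρ (c' + t • w0) := (hρ.differentiable one_ne_zero).differentiableAt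
    exact hd.hasFDerivAt.comp_hasDerivAt t (hline t)
  set φ : ℝ → ℝ := fun t => g t - t/2 with hφdef
  have hgcont : Continuous g := by
    rw [hgdef]
    exact hρ.continuous.comp (continuous_const.add (continuous_id.smul continuous_const))
  have hφmono : StrictMonoOn φ (Set.Icc (-T) T) := by
    apply strictMonoOn_of_deriv_pos (convex_Icc _ _)
    · exact (hgcont.sub (continuous_id.div_const 2)).continuousOn
    · intro t ht
      rw [interior_Icc] at ht
      have hd : HasDerivAt φ ((fderiv ℝ ρ (c' + t • w0)) w0 - 1/2) t := by
        have h2 : HasDerivAt (fun u : ℝ => u/2) ((1:ℝ)/2) t := by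
          simpa using (hasDerivAt_id t).div_const 2
        exact (hg t).sub h2
      rw [hd.deriv]
      have hmem := hmemball t (by rw [abs_le]; exact ⟨ht.1.le, ht.2.le⟩)
      have := hderiv _ hmem
      linarith
  have hg0 : |g 0| < T/4 := by
    have hdc : dist c' c < δ₃ := by
      rw [dist_eq_norm]
      apply lt_of_le_of_lt hc'c
      exact lt_of_lt_of_le hpck hη2
    have := hδ₃ hdc
    rw [Real.dist_eq, hρc, sub_zero] at this
    have hgc' : g 0 = ρ c' := by
      rw [hgdef]
      simp
    rw [hgc']
    exact this
  have h0mem : (0:ℝ) ∈ Set.Icc (-T) T := ⟨by linarith, hT.le⟩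
  have hTmem : T ∈ Set.Icc (-T) T := ⟨by linarith, le_rfl⟩
  have hmTmem : -T ∈ Set.Icc (-T) T := ⟨le_rfl, by linarith⟩
  have hφT : φ 0 < φ T := hφmono h0mem hTmem hT
  have hφmT : φ (-T) < φ 0 := hφmono hmTmem h0mem (by linarith)
  have hgT : 0 < g T := by
    have h1 : φ T = g T - T/2 := rfl
    have h2 : φ 0 = g 0 - 0/2 := rfl
    rw [abs_lt] at hg0
    have := hφT
    rw [h1, h2] at this
    linarith
  have hgmT : g (-T) < 0 := by
    have h1 : φ (-T) = g (-T) - (-T)/2 := rfl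
    have h2 : φ 0 = g 0 - 0/2 := rfl
    rw [abs_lt] at hg0
    have := hφmT
    rw [h1, h2] at this
    linarith
  obtain ⟨t0, ht0, hgt0⟩ := intermediate_value_Icc (by linarith : -T ≤ T)
    hgcont.continuousOn ⟨hgmT.le, hgT.le⟩
  set z : Fin n → ℂ := c' + t0 • w0 with hzdef
  have hzU : z ∈ U := hball (hmemball t0 (abs_le.mpr ⟨ht0.1, ht0.2⟩))
  have hzC : z ∈ C := by
    have hmem : z ∈ {w ∈ U | ρ w = 0} := ⟨hzU, hgt0⟩
    rw [← hCU] at hmem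
    exact hmem.1
  have hzk : z k = p := by
    rw [hzdef]
    have : (c' + t0 • w0) k = c' k + t0 • w0 k := rfl
    rw [this, hw0k, hc'def, Function.update_self]
    simp
  have hMz : MM n z = ⊤ := by
    have h1 : mfun (z k) = ⊤ := by rw [hzk, hpdef]; exact mfun_pole j
    have h2 : mfun (z k) ≤ MM n z :=
      Finset.single_le_sum (f := fun i => mfun (z i)) (fun i _ => zero_le) (Finset.mem_univ k)
    rw [h1] at h2
    exact top_le_iff.mp h2
  exact hCM z hzC hMz

end Stmt14
end

/-- Proposition A: for `n ≥ 2` there is an open dense subset `𝒜` of `Eⁿ`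
which is plurithin at `0` and whose complement `Eⁿ ∖ 𝒜` contains no non-empty relatively
open subset of a real hypersurface. -/
theorem stmt_14 (n : ℕ) (hn : 2 ≤ n) :
    ∃ 𝒜 : Set (Fin n → ℂ), IsOpen 𝒜 ∧ 𝒜 ⊆ polydisc n 1 ∧
      polydisc n 1 ⊆ closure 𝒜 ∧ Plurithin 𝒜 0 ∧
      ¬ ∃ C : Set (Fin n → ℂ), IsHypersurfacePiece C ∧ C ⊆ polydisc n 1 \ 𝒜 := by
  classical
  set M : (Fin n → ℂ) → ENNReal := Stmt14.MM n with hMdef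
  set s₀ : ENNReal := M 0 + 1 with hs₀def
  have hs₀top : s₀ ≠ ⊤ := by
    rw [hs₀def]
    exact ENNReal.add_ne_top.mpr ⟨Stmt14.MM_zero_ne_top n, ENNReal.one_ne_top⟩
  set A : Set (Fin n → ℂ) := {z | z ∈ polydisc n 1 ∧ s₀ < M z} with hAdef
  have hApoly : A ⊆ polydisc n 1 := fun z hz => hz.1
  have hpolyopen : IsOpen (polydisc n 1) := by
    have hp : polydisc n 1 = ⋂ k : Fin n, {z : Fin n → ℂ | Complex.abs (z k) < 1} := by
      ext z
      simp [polydisc, Set.mem_iInter]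
    rw [hp]
    exact isOpen_iInter_of_finite (fun k =>
      isOpen_lt (Complex.continuous_abs.comp (continuous_apply k)) continuous_const)
  have hAopen : IsOpen A := by
    have h1 : A = polydisc n 1 ∩ (M ⁻¹' Set.Ioi s₀) := by
      ext z
      simp [hAdef, Set.mem_setOf_eq]
    rw [h1]
    exact hpolyopen.inter ((Stmt14.MM_lsc n).isOpen_preimage s₀)
  have hMtop : ∀ z : Fin n → ℂ, Stmt14.mfun (z (⟨0, by omega⟩ : Fin n)) = ⊤ → M z = ⊤ := by
    intro z h1
    apply top_le_iff.mp
    rw [← h1]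
    exact Finset.single_le_sum (f := fun i => Stmt14.mfun (z i)) (fun i _ => zero_le)
      (Finset.mem_univ _)
  have hdense : polydisc n 1 ⊆ closure A := by
    intro z hz
    rw [Metric.mem_closure_iff]
    intro ε hε
    set k₀ : Fin n := ⟨0, by omega⟩ with hk₀def
    have hzk : Complex.abs (z k₀) < 1 := hz k₀
    obtain ⟨j, hj⟩ := Stmt14.aSeq_dense (z k₀) hzk (lt_min (by positivity : (0:ℝ) < ε/2) one_pos)
    set z' : Fin n → ℂ := Function.update z k₀ (Stmt14.aSeq j) with hz'def
    have hz'poly : z' ∈ polydisc n 1 := by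
      intro i
      rcases eq_or_ne i k₀ with rfl | hik
      · rw [hz'def]
        rw [Function.update_self]
        exact Stmt14.aSeq_lt j
      · rw [hz'def]
        rw [Function.update_of_ne hik]
        exact hz i
    refine ⟨z', ⟨hz'poly, ?_⟩, ?_⟩
    · have h1 : Stmt14.mfun (z' k₀) = ⊤ := by
        rw [hz'def, Function.update_self]
        exact Stmt14.mfun_pole j
      rw [hMtop z' h1]
      exact hs₀top.lt_top
    · rw [dist_pi_lt_iff hε]
      intro i
      rcases eq_or_ne i k₀ with rfl | hik
      · rw [hz'def, Function.update_self, Complex.dist_eq]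
        have h2 : Complex.abs (z k₀ - Stmt14.aSeq j) = Complex.abs (Stmt14.aSeq j - z k₀) := by
          rw [← map_neg_eq_map]
          congr 1
          ring
        rw [Complex.norm_eq_abs, h2]
        calc Complex.abs (Stmt14.aSeq j - z k₀) < min (ε/2) 1 := hj
          _ ≤ ε/2 := min_le_left _ _
          _ < ε := by linarith
      · rw [hz'def, Function.update_of_ne hik, dist_self]
        exact hε
  have h0poly : (0 : Fin n → ℂ) ∈ polydisc n 1 := by
    intro k
    simp
  refine ⟨A, hAopen, hApoly, hdense, ?_, ?_⟩
  · -- plurithin at 0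
    right
    refine ⟨hdense h0poly, polydisc n 1, hpolyopen, h0poly, Stmt14.uPSH n, Stmt14.pshOn_uPSH n, ?_⟩
    have hev : ∀ᶠ w in nhdsWithin 0 (A \ {(0 : Fin n → ℂ)}),
        Stmt14.uPSH n w ≤ -(((M 0 + 1 : ENNReal) : EReal)) := by
      filter_upwards [self_mem_nhdsWithin] with w hw
      have h1 : M 0 + 1 ≤ M w := (hw.1.2).le
      have h2 : Stmt14.uPSH n w = -((M w : EReal)) := rfl
      rw [h2, EReal.neg_le_neg_iff]
      exact EReal.coe_ennreal_le_coe_ennreal_iff.mpr h1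
    have hls := Filter.limsup_le_of_le (by isBoundedDefault) hev
    apply lt_of_le_of_lt hls
    have hu0 : Stmt14.uPSH n 0 = -((M 0 : EReal)) := rfl
    rw [hu0, EReal.neg_lt_neg_iff]
    exact EReal.coe_ennreal_lt_coe_ennreal_iff.mpr
      (ENNReal.lt_add_right (Stmt14.MM_zero_ne_top n) one_ne_zero)
  · -- no hypersurface piece
    rintro ⟨C, ⟨⟨c, hc⟩, hloc⟩, hsub⟩
    obtain ⟨U, ρ, hUopen, hcU, hρreg, hreg, hCU⟩ := hloc c hc
    refine Stmt14.hyper_contra hn (fun z hz => (hsub hz).1) ?_ hc hUopen hcU hρreg hreg hCU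
    intro z hz htop
    apply (hsub hz).2
    exact ⟨(hsub hz).1, by rw [hMdef] at *; rw [htop]; exact hs₀top.lt_top⟩
end
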